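/- arXiv:1407.7800 — 5 statements merged into one kernel-verified Lean document; each statement's English description precedes it below -/
import Mathlib

section
/- For every integer n ≥ 1 and every symmetric polynomial G ∈ ℂ[x_1,…,x_n] (i.e., G invariant under every permutation of its n variables), the element G(J_1,…,J_n) obtained by substituting the Jucys–Murphy elements for the indeterminates lies in the center Z(ℂ[S_n]) of the group algebra, i.e., it commutes with every element of ℂ[S_n]. -/
/-- The Jucys–Murphy element `J_b = ∑_{a < b} (a b)` in the complex group algebra of `S_n`. -/
noncomputable def JM (n : ℕ) (b : Fin n) : MonoidAlgebra ℂ (Equiv.Perm (Fin n)) :=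
  ∑ a ∈ Finset.Iio b, MonoidAlgebra.single (Equiv.swap a b) 1

/-- Substitution of the (pairwise commuting) Jucys–Murphy elements `J_1, …, J_n` for the
indeterminates of a multivariate polynomial `G ∈ ℂ[x_1, …, x_n]`: each monomial
`c · x_1^{m_1} ⋯ x_n^{m_n}` is sent to `c • J_1^{m_1} ⋯ J_n^{m_n}`. -/
noncomputable def evalJM (n : ℕ) (G : MvPolynomial (Fin n) ℂ) :
    MonoidAlgebra ℂ (Equiv.Perm (Fin n)) :=
  ∑ m ∈ G.support, G.coeff m • ((List.finRange n).map fun i => JM n i ^ m i).prod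

open MonoidAlgebra Equiv Finset MvPolynomial

namespace JMaux

variable {n : ℕ}

abbrev A (n : ℕ) := MonoidAlgebra ℂ (Equiv.Perm (Fin n))

lemma single_mul_JM (π : Equiv.Perm (Fin n)) (b : Fin n) (hb : π b = b)
    (h : ∀ y : Fin n, y < b → π y < b) :
    MonoidAlgebra.single π (1:ℂ) * JM n b = JM n b * MonoidAlgebra.single π 1 := by
  have himg : (Finset.Iio b).image π = Finset.Iio b := by
    apply Finset.eq_of_subset_of_card_le
    · intro x hx
      obtain ⟨y, hy, rfl⟩ := Finset.mem_image.mp hx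
      exact Finset.mem_Iio.mpr (h y (Finset.mem_Iio.mp hy))
    · rw [Finset.card_image_of_injective _ π.injective]
  have hterm : ∀ a ∈ Finset.Iio b,
      MonoidAlgebra.single π (1:ℂ) * MonoidAlgebra.single (Equiv.swap a b) 1
        = MonoidAlgebra.single (Equiv.swap (π a) b) 1 * MonoidAlgebra.single π 1 := by
    intro a _
    rw [MonoidAlgebra.single_mul_single, MonoidAlgebra.single_mul_single, one_mul]
    congr 1
    have h2 := Equiv.swap_apply_apply π a b
    rw [hb] at h2
    rw [h2]
    group
  unfold JM
  rw [Finset.mul_sum, Finset.sum_mul, Finset.sum_congr rfl hterm]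
  conv_rhs => rw [← himg]
  rw [Finset.sum_image (fun x _ y _ hxy => π.injective hxy)]

lemma JM_comm_lt {a b : Fin n} (hab : a < b) : JM n a * JM n b = JM n b * JM n a := by
  have h : ∀ x ∈ Finset.Iio a,
      MonoidAlgebra.single (Equiv.swap x a) (1:ℂ) * JM n b
        = JM n b * MonoidAlgebra.single (Equiv.swap x a) 1 := by
    intro x hx
    have hxa : x < a := Finset.mem_Iio.mp hx
    apply single_mul_JM
    · exact Equiv.swap_apply_of_ne_of_ne (ne_of_gt (lt_trans hxa hab)) (ne_of_gt hab)
    · intro y hy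
      rcases eq_or_ne y x with rfl | h1
      · rw [Equiv.swap_apply_left]; exact hab
      rcases eq_or_ne y a with rfl | h2
      · rw [Equiv.swap_apply_right]; exact lt_trans hxa hab
      · rw [Equiv.swap_apply_of_ne_of_ne h1 h2]; exact hy
  have ha : JM n a = ∑ x ∈ Finset.Iio a, MonoidAlgebra.single (Equiv.swap x a) (1:ℂ) := rfl
  rw [ha, Finset.sum_mul, Finset.mul_sum]
  exact Finset.sum_congr rfl h

lemma JM_comm (a b : Fin n) : JM n a * JM n b = JM n b * JM n a := by
  rcases lt_trichotomy a b with h | rfl | h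
  · exact JM_comm_lt h
  · rfl
  · exact (JM_comm_lt h).symm

section Adjacent

variable {i j : Fin n} (hj : (j : ℕ) = (i : ℕ) + 1)
include hj

lemma hIio : Finset.Iio j = insert i (Finset.Iio i) := by
  ext y
  simp only [Finset.mem_Iio, Finset.mem_insert, Fin.lt_def, Fin.ext_iff, hj]
  omega

lemma T_mul_JM_other (b : Fin n) (hbi : b ≠ i) (hbj : b ≠ j) :
    MonoidAlgebra.single (Equiv.swap i j) (1:ℂ) * JM n b
      = JM n b * MonoidAlgebra.single (Equiv.swap i j) 1 := by
  apply single_mul_JM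
  · exact Equiv.swap_apply_of_ne_of_ne hbi hbj
  · intro y hy
    rcases eq_or_ne y i with rfl | h1
    · rw [Equiv.swap_apply_left, Fin.lt_def, hj]
      have h3 := Fin.lt_def.mp hy
      have h4 : (y:ℕ) ≠ (b:ℕ) := fun h => hbi (Fin.ext h.symm)
      have h5 : (b:ℕ) ≠ (y:ℕ) + 1 := fun h => hbj (Fin.ext (by omega))
      omega
    rcases eq_or_ne y j with rfl | h2
    · rw [Equiv.swap_apply_right, Fin.lt_def]
      rw [Fin.lt_def] at hy
      omega
    · rw [Equiv.swap_apply_of_ne_of_ne h1 h2]; exact hy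

omit hj in
lemma hconj1 (y : Fin n) (h1 : y ≠ i) (h2 : y ≠ j) :
    Equiv.swap i j * Equiv.swap y j = Equiv.swap y i * Equiv.swap i j := by
  have h3 := Equiv.swap_apply_apply (Equiv.swap i j) y j
  rw [Equiv.swap_apply_of_ne_of_ne h1 h2, Equiv.swap_apply_right] at h3
  rw [h3]
  group

omit hj in
lemma hconj2 (y : Fin n) (h1 : y ≠ i) (h2 : y ≠ j) :
    Equiv.swap i j * Equiv.swap y i = Equiv.swap y j * Equiv.swap i j := by
  have h3 := Equiv.swap_apply_apply (Equiv.swap i j) y i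
  rw [Equiv.swap_apply_of_ne_of_ne h1 h2, Equiv.swap_apply_left] at h3
  rw [h3]
  group

lemma mem_Iio_ne (y : Fin n) (hy : y ∈ Finset.Iio i) : y ≠ i ∧ y ≠ j := by
  rw [Finset.mem_Iio, Fin.lt_def] at hy
  constructor <;> intro h <;> rw [h] at hy
  · omega
  · rw [hj] at hy; omega

omit hj in
lemma T_mul_T : MonoidAlgebra.single (Equiv.swap i j) (1:ℂ)
    * MonoidAlgebra.single (Equiv.swap i j) 1 = 1 := by
  rw [MonoidAlgebra.single_mul_single, one_mul, Equiv.swap_mul_self, MonoidAlgebra.one_def]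

lemma T_mul_JM_j :
    MonoidAlgebra.single (Equiv.swap i j) (1:ℂ) * JM n j
      = JM n i * MonoidAlgebra.single (Equiv.swap i j) 1 + 1 := by
  conv_lhs => rw [JM, hIio hj, Finset.sum_insert (by simp)]
  rw [mul_add, T_mul_T, Finset.mul_sum]
  rw [JM, Finset.sum_mul]
  rw [add_comm]
  congr 1
  apply Finset.sum_congr rfl
  intro y hy
  obtain ⟨h1, h2⟩ := mem_Iio_ne hj y hy
  rw [MonoidAlgebra.single_mul_single, MonoidAlgebra.single_mul_single, one_mul,
    hconj1 y h1 h2]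

lemma T_mul_JM_i :
    MonoidAlgebra.single (Equiv.swap i j) (1:ℂ) * JM n i
      = JM n j * MonoidAlgebra.single (Equiv.swap i j) 1 - 1 := by
  conv_rhs => rw [JM, hIio hj, Finset.sum_insert (by simp)]
  rw [add_mul, T_mul_T, Finset.sum_mul, add_sub_cancel_left]
  rw [JM, Finset.mul_sum]
  apply Finset.sum_congr rfl
  intro y hy
  obtain ⟨h1, h2⟩ := mem_Iio_ne hj y hy
  rw [MonoidAlgebra.single_mul_single, MonoidAlgebra.single_mul_single, one_mul,
    hconj2 y h1 h2]

end Adjacent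

noncomputable def Rsub (n : ℕ) : Subalgebra ℂ (A n) := Algebra.adjoin ℂ (Set.range (JM n))

noncomputable instance RCR (n : ℕ) : CommRing (Rsub n) :=
  { (Rsub n).toRing with
    mul_comm := (Algebra.isMulCommutative_adjoin ℂ (by
      rintro a ⟨x, rfl⟩ b ⟨y, rfl⟩
      exact JM_comm x y)).is_comm.comm }

noncomputable def Jsub (n : ℕ) (i : Fin n) : Rsub n :=
  ⟨JM n i, Algebra.subset_adjoin ⟨i, rfl⟩⟩

noncomputable def phi (n : ℕ) : MvPolynomial (Fin n) ℂ →ₐ[ℂ] A n :=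
  (Rsub n).val.comp (MvPolynomial.aeval (Jsub n))

lemma phi_X (i : Fin n) : phi n (X i) = JM n i := by
  simp [phi, Jsub]

lemma phi_eq_evalJM (G : MvPolynomial (Fin n) ℂ) : evalJM n G = phi n G := by
  rw [phi, AlgHom.comp_apply, MvPolynomial.aeval_def, MvPolynomial.eval₂_eq', map_sum]
  rw [evalJM]
  apply Finset.sum_congr rfl
  intro d _
  rw [← Algebra.smul_def, map_smul]
  congr 1
  rw [Fin.prod_univ_def, map_list_prod]
  simp [Function.comp_def, Jsub]

/-- The key divided-difference identity, proved by induction on the polynomial. -/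
lemma key (i j : Fin n) (hj : (j : ℕ) = (i : ℕ) + 1) (f : MvPolynomial (Fin n) ℂ) :
    ∃ g : MvPolynomial (Fin n) ℂ,
      f - MvPolynomial.rename (Equiv.swap i j) f = (X i - X j) * g ∧
      MonoidAlgebra.single (Equiv.swap i j) (1:ℂ) * phi n f
        = phi n (MvPolynomial.rename (Equiv.swap i j) f)
            * MonoidAlgebra.single (Equiv.swap i j) 1 - phi n g := by
  induction f using MvPolynomial.induction_on with
  | C c =>
      refine ⟨0, by simp, ?_⟩
      rw [map_zero, sub_zero, rename_C]
      simp only [← MvPolynomial.algebraMap_eq, AlgHom.commutes]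
      exact (Algebra.commutes c _).symm
  | add p q hp hq =>
      obtain ⟨g1, h11, h12⟩ := hp
      obtain ⟨g2, h21, h22⟩ := hq
      refine ⟨g1 + g2, ?_, ?_⟩
      · rw [map_add]
        linear_combination h11 + h21
      · simp only [map_add]
        rw [mul_add, h12, h22, add_mul]
        noncomm_ring
  | mul_X p k hp =>
      obtain ⟨g, h1, h2⟩ := hp
      rcases eq_or_ne k i with rfl | hki
      · refine ⟨g * X k + MvPolynomial.rename (Equiv.swap k j) p, ?_, ?_⟩
        · rw [map_mul, rename_X, Equiv.swap_apply_left]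
          linear_combination (X k : MvPolynomial (Fin n) ℂ) * h1
        · simp only [map_mul, map_add, rename_X, Equiv.swap_apply_left, phi_X]
          rw [← mul_assoc, h2, sub_mul, mul_assoc, T_mul_JM_i hj]
          noncomm_ring
      rcases eq_or_ne k j with rfl | hkj
      · refine ⟨g * X k - MvPolynomial.rename (Equiv.swap i k) p, ?_, ?_⟩
        · rw [map_mul, rename_X, Equiv.swap_apply_right]
          linear_combination (X k : MvPolynomial (Fin n) ℂ) * h1
        · simp only [map_mul, map_sub, rename_X, Equiv.swap_apply_right, phi_X]
          rw [← mul_assoc, h2, sub_mul, mul_assoc, T_mul_JM_j hj]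
          noncomm_ring
      · refine ⟨g * X k, ?_, ?_⟩
        · rw [map_mul, rename_X, Equiv.swap_apply_of_ne_of_ne hki hkj]
          linear_combination (X k : MvPolynomial (Fin n) ℂ) * h1
        · simp only [map_mul, rename_X, Equiv.swap_apply_of_ne_of_ne hki hkj, phi_X]
          rw [← mul_assoc, h2, sub_mul, mul_assoc, T_mul_JM_other hj k hki hkj]
          noncomm_ring

/-- A symmetric polynomial's evaluation commutes with adjacent transpositions. -/
lemma symm_comm_adjacent {G : MvPolynomial (Fin n) ℂ} (hG : G.IsSymmetric)
    (i j : Fin n) (hj : (j : ℕ) = (i : ℕ) + 1) :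
    MonoidAlgebra.single (Equiv.swap i j) (1:ℂ) * phi n G
      = phi n G * MonoidAlgebra.single (Equiv.swap i j) 1 := by
  obtain ⟨g, h1, h2⟩ := key i j hj G
  rw [hG (Equiv.swap i j), sub_self] at h1
  have hij : i ≠ j := fun h => by rw [h] at hj; omega
  have hX : (X i - X j : MvPolynomial (Fin n) ℂ) ≠ 0 :=
    sub_ne_zero.mpr fun h => hij (MvPolynomial.X_injective h)
  have hg : g = 0 := by
    rcases mul_eq_zero.mp h1.symm with h | h
    · exact absurd h hX
    · exact h
  rw [hG (Equiv.swap i j), hg, map_zero, sub_zero] at h2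
  exact h2

lemma comm_swap_aux (z : A n)
    (hz : ∀ i j : Fin n, (j : ℕ) = (i : ℕ) + 1 →
      z * MonoidAlgebra.single (Equiv.swap i j) 1 = MonoidAlgebra.single (Equiv.swap i j) 1 * z) :
    ∀ d : ℕ, ∀ x y : Fin n, (y : ℕ) = (x : ℕ) + d + 1 →
      Commute z (MonoidAlgebra.single (Equiv.swap x y) (1:ℂ)) := by
  intro d
  induction d using Nat.strong_induction_on with
  | _ d ih =>
    intro x y hxy
    rcases Nat.eq_zero_or_pos d with rfl | hd
    · exact hz x y (by omega)
    · have hyn : (x : ℕ) + d + 1 < n := hxy ▸ y.isLt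
      set m : Fin n := ⟨(x : ℕ) + d, by omega⟩ with hm
      have hxm : x ≠ m := by
        intro h; rw [Fin.ext_iff] at h; simp [hm] at h; omega
      have hxy' : x ≠ y := by
        intro h; rw [Fin.ext_iff] at h; omega
      have h1 : Commute z (MonoidAlgebra.single (Equiv.swap x m) (1:ℂ)) :=
        ih (d - 1) (by omega) x m (by simp [hm]; omega)
      have h2 : Commute z (MonoidAlgebra.single (Equiv.swap m y) (1:ℂ)) :=
        ih 0 hd m y (by simp [hm]; omega)
      have hsw : Equiv.swap x y = Equiv.swap m y * Equiv.swap x m * Equiv.swap m y := by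
        rw [Equiv.swap_mul_swap_mul_swap hxm hxy', Equiv.swap_comm]
      have hsingle : MonoidAlgebra.single (Equiv.swap x y) (1:ℂ)
          = MonoidAlgebra.single (Equiv.swap m y) 1 * MonoidAlgebra.single (Equiv.swap x m) 1
              * MonoidAlgebra.single (Equiv.swap m y) 1 := by
        rw [MonoidAlgebra.single_mul_single, MonoidAlgebra.single_mul_single, hsw]
        ring_nf
      rw [hsingle]
      exact (h2.mul_right h1).mul_right h2

lemma comm_single (z : A n)
    (hz : ∀ i j : Fin n, (j : ℕ) = (i : ℕ) + 1 →
      z * MonoidAlgebra.single (Equiv.swap i j) 1 = MonoidAlgebra.single (Equiv.swap i j) 1 * z)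
    (σ : Equiv.Perm (Fin n)) : Commute z (MonoidAlgebra.single σ (1:ℂ)) := by
  have hswap : ∀ x y : Fin n, x ≠ y → Commute z (MonoidAlgebra.single (Equiv.swap x y) (1:ℂ)) := by
    intro x y hxy
    rcases lt_trichotomy x y with h | h | h
    · rw [Fin.lt_def] at h
      exact comm_swap_aux z hz ((y : ℕ) - (x : ℕ) - 1) x y (by omega)
    · exact absurd h hxy
    · rw [Fin.lt_def] at h
      rw [Equiv.swap_comm]
      exact comm_swap_aux z hz ((x : ℕ) - (y : ℕ) - 1) y x (by omega)
  refine Equiv.Perm.swap_induction_on σ ?_ ?_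
  · rw [← MonoidAlgebra.one_def]; exact Commute.one_right z
  · intro f x y hxy hf
    have h : MonoidAlgebra.single (Equiv.swap x y * f) (1:ℂ)
        = MonoidAlgebra.single (Equiv.swap x y) 1 * MonoidAlgebra.single f 1 := by
      rw [MonoidAlgebra.single_mul_single, one_mul]
    rw [h]
    exact (hswap x y hxy).mul_right hf

end JMaux

/-- A symmetric polynomial evaluated at the Jucys–Murphy elements lies in the center of the
group algebra `ℂ[S_n]`, i.e. it commutes with every element of `ℂ[S_n]`. -/
theorem symmetric_evalJM_central (n : ℕ) (hn : 1 ≤ n) (G : MvPolynomial (Fin n) ℂ)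
    (hG : G.IsSymmetric) :
    ∀ x : MonoidAlgebra ℂ (Equiv.Perm (Fin n)), evalJM n G * x = x * evalJM n G := by
  intro x
  rw [JMaux.phi_eq_evalJM]
  set z := JMaux.phi n G with hz
  have hadj : ∀ i j : Fin n, (j : ℕ) = (i : ℕ) + 1 →
      z * MonoidAlgebra.single (Equiv.swap i j) 1 = MonoidAlgebra.single (Equiv.swap i j) 1 * z :=
    fun i j hj => (JMaux.symm_comm_adjacent hG i j hj).symm
  have hsingle : ∀ σ : Equiv.Perm (Fin n), Commute z (MonoidAlgebra.single σ (1:ℂ)) :=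
    JMaux.comm_single z hadj
  suffices h : Commute z x from h
  induction x using MonoidAlgebra.induction with
  | zero => exact Commute.zero_right z
  | single_add a b f _ _ hf =>
      have hab : (MonoidAlgebra.single a b : MonoidAlgebra ℂ (Equiv.Perm (Fin n)))
          = b • MonoidAlgebra.single a 1 := by
        rw [MonoidAlgebra.smul_single', mul_one]
      have h1 : Commute z (MonoidAlgebra.single a b) := by
        rw [hab]; exact (hsingle a).smul_right b
      exact h1.add_right hf
end

section
/- For every integer n ≥ 1 and every k ≥ 0, the complete homogeneous symmetric polynomial evaluated at the Jucys–Murphy elements satisfies h_k(J_1,…,J_n) = Σ (a_1 b_1)(a_2 b_2)⋯(a_k b_k), where the sum in ℂ[S_n] runs over all sequences of transpositions ((a_1 b_1),…,(a_k b_k)) with 1 ≤ a_i < b_i ≤ n for each i and b_1 ≤ b_2 ≤ ⋯ ≤ b_k (i.e., over all weakly monotonically increasing sequences of k transpositions). -/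
open scoped Classical

-- P1: noncommutative multi-distribution over a list product
theorem prod_ofFn_sum {R α : Type*} [Semiring R] [DecidableEq α] :
    ∀ (k : ℕ) (S : Fin k → Finset α) (f : (i : Fin k) → α → R),
    (List.ofFn fun i => ∑ a ∈ S i, f i a).prod
      = ∑ g ∈ Fintype.piFinset S, (List.ofFn fun i => f i (g i)).prod := by
  intro k
  induction k with
  | zero => intro S f; simp
  | succ k ih =>
    intro S f
    rw [List.ofFn_succ, List.prod_cons, ih (fun i => S i.succ) (fun i a => f i.succ a),
      Finset.sum_mul]
    simp_rw [Finset.mul_sum]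
    rw [Finset.sum_sigma']
    refine Finset.sum_nbij' (fun p => Fin.cons p.1 p.2)
      (fun g => ⟨g 0, fun i => g i.succ⟩) ?_ ?_ ?_ ?_ ?_
    · rintro ⟨a, g⟩ h
      simp only [Finset.mem_sigma, Fintype.mem_piFinset] at h ⊢
      intro i
      refine Fin.cases ?_ ?_ i
      · simpa using h.1
      · intro j; simpa using h.2 j
    · intro g hg
      simp only [Fintype.mem_piFinset] at hg
      exact Finset.mem_sigma.2 ⟨by simpa using hg 0, Fintype.mem_piFinset.2 fun j => hg j.succ⟩
    · rintro ⟨a, g⟩ h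
      simp
    · intro g hg
      funext i
      refine Fin.cases ?_ ?_ i <;> simp
    · rintro ⟨a, g⟩ h
      rw [List.ofFn_succ]
      simp

noncomputable def fJM (n : ℕ) (m : Fin n →₀ ℕ) : MonoidAlgebra ℂ (Equiv.Perm (Fin n)) :=
  ((List.finRange n).map fun i => JM n i ^ m i).prod

theorem evalJM_def (n : ℕ) (G : MvPolynomial (Fin n) ℂ) :
    evalJM n G = (AddMonoidAlgebra.coeff G).sum fun m c => c • fJM n m := by
  rw [MvPolynomial.sum_def]; rfl

theorem evalJM_addHom (n : ℕ) (G H : MvPolynomial (Fin n) ℂ) :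
    evalJM n (G + H) = evalJM n G + evalJM n H := by
  simp only [evalJM_def, AddMonoidAlgebra.coeff_add]
  exact Finsupp.sum_add_index' (fun m => zero_smul ℂ _) (fun m b₁ b₂ => add_smul b₁ b₂ _)

theorem evalJM_sum {ι : Type*} (n : ℕ) (t : Finset ι) (P : ι → MvPolynomial (Fin n) ℂ) :
    evalJM n (∑ s ∈ t, P s) = ∑ s ∈ t, evalJM n (P s) :=
  map_sum (AddMonoidHom.mk' (evalJM n) (evalJM_addHom n)) P t

theorem evalJM_monomial (n : ℕ) (m : Fin n →₀ ℕ) :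
    evalJM n (MvPolynomial.monomial m (1 : ℂ)) = fJM n m := by
  rw [evalJM]
  rw [MvPolynomial.support_monomial]
  simp [MvPolynomial.coeff_monomial, fJM]

theorem prod_X_multiset {σ R : Type*} [CommSemiring R] [DecidableEq σ] (μ : Multiset σ) :
    (μ.map (MvPolynomial.X : σ → MvPolynomial σ R)).prod
      = MvPolynomial.monomial μ.toFinsupp 1 := by
  induction μ using Multiset.induction with
  | empty => simp [MvPolynomial.monomial_eq]
  | cons a μ ih =>
    have : (a ::ₘ μ) = ({a} : Multiset σ) + μ := by
      rw [Multiset.singleton_add]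
    rw [Multiset.map_cons, Multiset.prod_cons, ih, this, Multiset.toFinsupp_add,
      Multiset.toFinsupp_singleton, MvPolynomial.X, MvPolynomial.monomial_mul, one_mul]

theorem flatMap_count_eq {n : ℕ} {l : List (Fin n)} (hl : l.Pairwise (· ≤ ·)) :
    ((List.finRange n).flatMap fun i => List.replicate (l.count i) i) = l := by
  refine (fun hp hs => List.Perm.eq_of_pairwise' hs hl hp) (List.perm_iff_count.2 fun a => ?_) ?_
  · rw [List.count_flatMap, ← Fin.sum_univ_def]
    have key : ∀ i : Fin n, (List.count a ∘ fun i => List.replicate (l.count i) i) i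
        = if a = i then l.count i else 0 := by
      intro i
      rw [Function.comp_apply, List.count_replicate]
      by_cases h : i = a
      · subst h; simp
      · rw [if_neg (by simpa using h), if_neg (fun hh => h hh.symm)]
    rw [Finset.sum_congr rfl fun i _ => key i]
    rw [Finset.sum_ite_eq]
    simp
  · rw [List.pairwise_flatMap]
    constructor
    · intro i _
      exact List.pairwise_replicate.2 (Or.inr le_rfl)
    · exact (List.pairwise_lt_finRange n).imp fun {i j} hij x hx y hy => by
        rw [List.eq_of_mem_replicate hx, List.eq_of_mem_replicate hy]; exact hij.le

theorem prod_pow_count {n : ℕ} {M : Type*} [Monoid M] (F : Fin n → M)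
    {l : List (Fin n)} (hl : l.Pairwise (· ≤ ·)) :
    ((List.finRange n).map fun i => F i ^ l.count i).prod = (l.map F).prod := by
  conv_rhs => rw [← flatMap_count_eq hl]
  rw [List.map_flatMap, List.flatMap_def, List.prod_flatten, List.map_map]
  congr 1
  refine List.map_congr_left fun i _ => ?_
  simp [List.prod_replicate]

theorem fJM_ofFn {n k : ℕ} {b : Fin k → Fin n} (hb : Monotone b) :
    fJM n (Multiset.toFinsupp ↑(List.ofFn b)) = (List.ofFn fun i => JM n (b i)).prod := by
  have hs : (List.ofFn b).Pairwise (· ≤ ·) := List.sortedLE_iff_pairwise.1 (List.sortedLE_ofFn_iff.2 hb)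
  rw [fJM]
  have : ∀ i : Fin n, (Multiset.toFinsupp (↑(List.ofFn b) : Multiset (Fin n))) i
      = (List.ofFn b).count i := fun i => by
    rw [Multiset.toFinsupp_apply, Multiset.coe_count]
  simp only [this]
  rw [prod_pow_count (JM n) hs, List.map_ofFn]
  rfl

theorem single_ofFn_prod {n k : ℕ} (g : Fin k → Equiv.Perm (Fin n)) :
    (List.ofFn fun i => MonoidAlgebra.single (g i) (1 : ℂ)).prod
      = MonoidAlgebra.single ((List.ofFn g).prod) 1 := by
  have : (List.ofFn fun i => MonoidAlgebra.single (g i) (1 : ℂ))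
      = (List.ofFn g).map (MonoidAlgebra.of ℂ (Equiv.Perm (Fin n))) := by
    rw [List.map_ofFn]; rfl
  rw [this, ← map_list_prod (MonoidAlgebra.of ℂ (Equiv.Perm (Fin n)))]
  rfl

theorem JM_prod_expand {n k : ℕ} (b : Fin k → Fin n) :
    (List.ofFn fun i => JM n (b i)).prod
      = ∑ a ∈ Fintype.piFinset fun i => Finset.Iio (b i),
          MonoidAlgebra.single ((List.ofFn fun i => Equiv.swap (a i) (b i)).prod) 1 := by
  have := prod_ofFn_sum k (fun i => Finset.Iio (b i))
    (fun i a => MonoidAlgebra.single (Equiv.swap a (b i)) (1 : ℂ))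
  simp only [JM]
  rw [this]
  exact Finset.sum_congr rfl fun a _ => single_ofFn_prod fun i => Equiv.swap (a i) (b i)

/-- The complete homogeneous symmetric polynomial `h_k` evaluated at the Jucys–Murphy elements
equals the sum, in `ℂ[S_n]`, of the products `(a_1 b_1) ⋯ (a_k b_k)` over all weakly
monotonically increasing sequences of `k` transpositions, i.e. sequences with `a_i < b_i`
for each `i` and `b_1 ≤ b_2 ≤ ⋯ ≤ b_k`. -/
theorem hsymm_JM_eq_sum_weakly_monotone (n : ℕ) (hn : 1 ≤ n) (k : ℕ) :
    evalJM n (MvPolynomial.hsymm (Fin n) ℂ k) =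
      ∑ p ∈ Finset.univ.filter
          (fun p : (Fin k → Fin n) × (Fin k → Fin n) =>
            (∀ i, p.1 i < p.2 i) ∧ Monotone p.2),
        MonoidAlgebra.single ((List.ofFn fun i => Equiv.swap (p.1 i) (p.2 i)).prod) 1 := by
  -- reshape the RHS
  rw [Finset.sum_finset_product_right _
      (Finset.univ.filter fun b : Fin k → Fin n => Monotone b)
      (fun b => Fintype.piFinset fun i => Finset.Iio (b i))
      (by intro p; simp [Fintype.mem_piFinset, and_comm])]
  simp only [← JM_prod_expand]
  -- reshape the LHS
  rw [MvPolynomial.hsymm, evalJM_sum]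
  have hterm : ∀ s : Sym (Fin n) k,
      evalJM n ((s.1.map MvPolynomial.X).prod) = fJM n s.1.toFinsupp := by
    intro s
    rw [prod_X_multiset, evalJM_monomial]
  rw [Finset.sum_congr rfl fun s _ => hterm s]
  -- the bijection between Sym (Fin n) k and monotone tuples
  have hlen : ∀ s : Sym (Fin n) k, k = (s.1.sort (· ≤ ·)).length := fun s => by
    rw [Multiset.length_sort, s.2]
  refine Finset.sum_nbij' (fun s => fun j : Fin k => (s.1.sort (· ≤ ·)).get (Fin.cast (hlen s) j))
    (fun b => ⟨(↑(List.ofFn b) : Multiset (Fin n)), by simp⟩) ?_ ?_ ?_ ?_ ?_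
  · -- maps into monotone tuples
    intro s _
    simp only [Finset.mem_filter, Finset.mem_univ, true_and]
    intro j₁ j₂ hj
    rcases eq_or_lt_of_le hj with h | h
    · rw [h]
    · exact (List.pairwise_iff_get.1 (Multiset.pairwise_sort s.1 _)) _ _ (Fin.lt_def.2 (Fin.lt_def.1 h))
  · intro b _; exact Finset.mem_univ _
  · -- left inverse
    intro s _
    have : (List.ofFn fun j : Fin k => (s.1.sort (· ≤ ·)).get (Fin.cast (hlen s) j))
        = s.1.sort (· ≤ ·) := by
      refine List.ext_getElem (by simp [(hlen s).symm]) ?_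
      intro i h1 h2
      simp [List.getElem_ofFn]
      rfl
    apply Subtype.ext
    dsimp only
    rw [this, Multiset.sort_eq]
  · -- right inverse
    intro b hb
    have hmono : Monotone b := by simpa using (Finset.mem_filter.1 hb).2
    have hsort : ((↑(List.ofFn b) : Multiset (Fin n)).sort (· ≤ ·)) = List.ofFn b := by
      refine List.Perm.eq_of_pairwise' (Multiset.pairwise_sort _ _)
        (List.sortedLE_iff_pairwise.1 (List.sortedLE_ofFn_iff.2 hmono)) ?_
      rw [← Multiset.coe_eq_coe, Multiset.sort_eq]
    funext j
    dsimp only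
    rw [List.get_of_eq hsort, List.get_ofFn]
    exact congrArg b (Fin.ext rfl)
  · -- values agree
    intro s _
    have hmono : Monotone (fun j : Fin k => (s.1.sort (· ≤ ·)).get (Fin.cast (hlen s) j)) := by
      intro j₁ j₂ hj
      rcases eq_or_lt_of_le hj with h | h
      · rw [h]
      · exact (List.pairwise_iff_get.1 (Multiset.pairwise_sort s.1 _)) _ _ (Fin.lt_def.2 (Fin.lt_def.1 h))
    have hcoe : (↑(List.ofFn fun j : Fin k => (s.1.sort (· ≤ ·)).get (Fin.cast (hlen s) j))
        : Multiset (Fin n)) = s.1 := by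
      have : (List.ofFn fun j : Fin k => (s.1.sort (· ≤ ·)).get (Fin.cast (hlen s) j))
          = s.1.sort (· ≤ ·) := by
        refine List.ext_getElem (by simp [(hlen s).symm]) ?_
        intro i h1 h2
        simp [List.getElem_ofFn]
        rfl
      rw [this, Multiset.sort_eq]
    have := fJM_ofFn hmono; rw [hcoe] at this; exact this
end

section
/- For every integer n ≥ 1 and all nonnegative integers c_1,…,c_l and d_1,…,d_m with k := Σ_{a=1}^l c_a + Σ_{b=1}^m d_b, one has in ℂ[S_n]: (∏_{a=1}^l e_{c_a}(J_1,…,J_n)) · (∏_{b=1}^m h_{d_b}(J_1,…,J_n)) = Σ (a_1 b_1)(a_2 b_2)⋯(a_k b_k), where the sum runs over all multimonotonic sequences of transpositions of type ((c_1,…,c_l),(d_1,…,d_m)). -/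
open scoped Classical

/-- A list `L` of pairs `(a_i, b_i)`, encoding the sequence of transpositions
`((a_1 b_1), …, (a_k b_k))`, is *multimonotonic of type `(cs, ds)`* if `a_i < b_i` for each
`i` and `L` splits into consecutive blocks of lengths `cs` followed by blocks of lengths
`ds`, where within each of the first blocks the second entries are strictly increasing and
within each of the last blocks they are weakly increasing. -/
def IsMultimonotonic (n : ℕ) (cs ds : List ℕ) (L : List (Fin n × Fin n)) : Prop :=
  (∀ p ∈ L, p.1 < p.2) ∧
  ∃ B C : List (List (Fin n × Fin n)),
    L = (B ++ C).flatten ∧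
    B.map List.length = cs ∧
    C.map List.length = ds ∧
    (∀ β ∈ B, (β.map Prod.snd).Chain' (· < ·)) ∧
    (∀ β ∈ C, (β.map Prod.snd).Chain' (· ≤ ·))

/-- The product, in `S_n`, of the sequence of transpositions encoded by a list of pairs. -/
def prodT (n : ℕ) (L : List (Fin n × Fin n)) : Equiv.Perm (Fin n) :=
  (L.map fun p => Equiv.swap p.1 p.2).prod

-- ==== auxiliary lemmas ====
namespace JMaux

lemma prodT_nil (n : ℕ) : prodT n [] = 1 := rfl

lemma prodT_cons (n : ℕ) (p : Fin n × Fin n) (L : List (Fin n × Fin n)) :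
    prodT n (p :: L) = Equiv.swap p.1 p.2 * prodT n L := by
  simp [prodT]

lemma prodT_append (n : ℕ) (L1 L2 : List (Fin n × Fin n)) :
    prodT n (L1 ++ L2) = prodT n L1 * prodT n L2 := by
  simp [prodT]

lemma JM_eq (n : ℕ) (b : Fin n) :
    JM n b = ∑ p : Fin n × Fin n,
      if p.1 < p.2 ∧ p.2 = b then MonoidAlgebra.single (Equiv.swap p.1 p.2) 1 else 0 := by
  have h1 : ∀ a : Fin n, (∑ y : Fin n,
      if a < y ∧ y = b then MonoidAlgebra.single (Equiv.swap a y) (1:ℂ) else 0)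
      = if a < b then MonoidAlgebra.single (Equiv.swap a b) 1 else 0 := by
    intro a
    have h2 : ∀ y : Fin n, (if a < y ∧ y = b then MonoidAlgebra.single (Equiv.swap a y) (1:ℂ) else 0)
        = if y = b then (if a < y then MonoidAlgebra.single (Equiv.swap a y) 1 else 0) else 0 := by
      intro y; by_cases h : y = b <;> by_cases h2 : a < y <;> simp [h, h2]
    rw [Finset.sum_congr rfl fun y _ => h2 y, Finset.sum_ite_eq' Finset.univ b]
    simp
  have h3 : (∑ p : Fin n × Fin n,
      if p.1 < p.2 ∧ p.2 = b then MonoidAlgebra.single (Equiv.swap p.1 p.2) (1:ℂ) else 0)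
      = ∑ a : Fin n, if a < b then MonoidAlgebra.single (Equiv.swap a b) 1 else 0 := by
    rw [Fintype.sum_prod_type]
    exact Finset.sum_congr rfl fun a _ => h1 a
  rw [h3, JM, show Finset.Iio b = Finset.univ.filter (· < b) by ext a; simp,
    Finset.sum_filter]

end JMaux

namespace JMaux

lemma ofFn_cons {α : Type*} {k : ℕ} (p : α) (g : Fin k → α) :
    List.ofFn (Fin.cons p g) = p :: List.ofFn g := by
  rw [List.ofFn_succ]; simp

lemma JM_list_prod (n : ℕ) (bs : List (Fin n)) (k : ℕ) (hk : bs.length = k) :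
    (bs.map (JM n)).prod =
    ∑ f ∈ Finset.univ.filter (fun f : Fin k → Fin n × Fin n =>
        (∀ p ∈ List.ofFn f, p.1 < p.2) ∧ (List.ofFn f).map Prod.snd = bs),
      MonoidAlgebra.single (prodT n (List.ofFn f)) 1 := by
  induction bs generalizing k with
  | nil =>
    simp only [List.length_nil] at hk; subst hk
    rw [Finset.filter_true_of_mem (fun f _ => by simp)]
    simp only [List.map_nil, List.prod_nil]
    rw [Finset.univ_unique, Finset.sum_singleton]
    simp [prodT, MonoidAlgebra.one_def]
  | cons b bs IH =>
    simp only [List.length_cons] at hk; subst hk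
    rw [List.map_cons, List.prod_cons, IH bs.length rfl, JM_eq, Finset.sum_filter,
      Finset.sum_mul_sum]
    rw [Finset.sum_filter (s := (Finset.univ : Finset (Fin (bs.length + 1) → Fin n × Fin n)))]
    rw [← Finset.sum_product', Finset.univ_product_univ]
    refine Fintype.sum_equiv (Fin.consEquiv (fun _ => Fin n × Fin n)) _ _ fun x => ?_
    obtain ⟨p, g⟩ := x
    have hc : Fin.consEquiv (fun _ => Fin n × Fin n) (p, g) = Fin.cons p g := rfl
    rw [hc, ite_zero_mul_ite_zero, MonoidAlgebra.single_mul_single, mul_one, ofFn_cons, prodT_cons]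
    refine if_congr ?_ rfl rfl
    simp only [List.forall_mem_cons, List.map_cons, List.cons.injEq]
    tauto

end JMaux

namespace JMaux

noncomputable def prodJ (n : ℕ) (m : Fin n →₀ ℕ) : MonoidAlgebra ℂ (Equiv.Perm (Fin n)) :=
  ((List.finRange n).map fun i => JM n i ^ m i).prod

def bsOf (n : ℕ) (m : Fin n →₀ ℕ) : List (Fin n) :=
  ((List.finRange n).map fun i => List.replicate (m i) i).flatten

lemma evalJM_eq_finsuppSum (n : ℕ) (G : MvPolynomial (Fin n) ℂ) :
    evalJM n G = (AddMonoidAlgebra.coeff G).sum fun m c => c • prodJ n m := rfl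

/-- evalJM as an additive monoid hom. -/
noncomputable def evalJMHom (n : ℕ) : MvPolynomial (Fin n) ℂ →+ MonoidAlgebra ℂ (Equiv.Perm (Fin n)) :=
  (Finsupp.liftAddHom fun m => AddMonoidHom.flip (smulAddHom ℂ (MonoidAlgebra ℂ (Equiv.Perm (Fin n)))) (prodJ n m)).comp
    AddMonoidAlgebra.coeffAddEquiv.toAddMonoidHom

lemma evalJM_eq_hom (n : ℕ) (G : MvPolynomial (Fin n) ℂ) :
    evalJM n G = evalJMHom n G := by
  rw [evalJM_eq_finsuppSum, evalJMHom]
  exact (Finsupp.liftAddHom_apply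
    (fun m => (smulAddHom ℂ (MonoidAlgebra ℂ (Equiv.Perm (Fin n)))).flip (prodJ n m)) (AddMonoidAlgebra.coeff G)).symm

lemma evalJM_sum {ι : Type*} (n : ℕ) (T : Finset ι) (q : ι → MvPolynomial (Fin n) ℂ) :
    evalJM n (∑ t ∈ T, q t) = ∑ t ∈ T, evalJM n (q t) := by
  simp only [evalJM_eq_hom]
  exact map_sum (evalJMHom n) q T

lemma evalJM_monomial (n : ℕ) (m : Fin n →₀ ℕ) :
    evalJM n (MvPolynomial.monomial m (1:ℂ)) = prodJ n m := by
  rw [evalJM]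
  rw [MvPolynomial.support_monomial]
  simp [prodJ]

lemma multiset_prod_X (n : ℕ) (μ : Multiset (Fin n)) :
    (μ.map MvPolynomial.X).prod = MvPolynomial.monomial (Multiset.toFinsupp μ) (1:ℂ) := by
  induction μ using Multiset.induction_on with
  | empty => simp [MvPolynomial.monomial_zero', Multiset.toFinsupp_zero]
  | cons a s ih =>
    rw [Multiset.map_cons, Multiset.prod_cons, ih, MvPolynomial.X,
      MvPolynomial.monomial_mul, show a ::ₘ s = {a} + s from (Multiset.singleton_add a s).symm,
      Multiset.toFinsupp_add, Multiset.toFinsupp_singleton, one_mul]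

lemma prodJ_eq (n : ℕ) (m : Fin n →₀ ℕ) :
    prodJ n m = ((bsOf n m).map (JM n)).prod := by
  rw [prodJ, bsOf, List.map_flatten, List.prod_flatten, List.map_map, List.map_map]
  congr 1
  refine List.map_congr_left fun i _ => ?_
  simp [List.map_replicate, List.prod_replicate]

end JMaux

namespace JMaux

lemma count_flatten_replicate {n : ℕ} (m : Fin n →₀ ℕ) (l : List (Fin n)) (hl : l.Nodup)
    (j : Fin n) :
    ((l.map fun i => List.replicate (m i) i).flatten).count j = if j ∈ l then m j else 0 := by
  induction l with
  | nil => simp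
  | cons i l ih =>
    rw [List.nodup_cons] at hl
    rw [List.map_cons, List.flatten_cons, List.count_append, List.count_replicate,
      ih hl.2]
    by_cases h : j = i
    · subst h
      simp [hl.1]
    · simp [h, Ne.symm h]

lemma bsOf_coe {n : ℕ} (m : Fin n →₀ ℕ) :
    (↑(bsOf n m) : Multiset (Fin n)) = Finsupp.toMultiset m := by
  ext j
  rw [Multiset.coe_count, Finsupp.count_toMultiset, bsOf,
    count_flatten_replicate m _ (List.nodup_finRange n) j, if_pos (List.mem_finRange j)]

lemma bsOf_length {n : ℕ} (m : Fin n →₀ ℕ) :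
    (bsOf n m).length = Multiset.card (Finsupp.toMultiset m) := by
  rw [← bsOf_coe, Multiset.coe_card]

lemma bsOf_pairwise_le {n : ℕ} (m : Fin n →₀ ℕ) : (bsOf n m).Pairwise (· ≤ ·) := by
  rw [bsOf, List.pairwise_flatten]
  constructor
  · intro l' hl'
    obtain ⟨i, _, rfl⟩ := List.mem_map.1 hl'
    exact List.pairwise_replicate.2 (Or.inr le_rfl)
  · refine List.Pairwise.map _ ?_ (List.pairwise_lt_finRange n)
    intro a b hab x hx y hy
    rw [List.eq_of_mem_replicate hx, List.eq_of_mem_replicate hy]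
    exact le_of_lt hab

lemma bsOf_pairwise_lt {n : ℕ} (m : Fin n →₀ ℕ) (hm : ∀ i, m i ≤ 1) :
    (bsOf n m).Pairwise (· < ·) := by
  rw [bsOf, List.pairwise_flatten]
  constructor
  · intro l' hl'
    obtain ⟨i, _, rfl⟩ := List.mem_map.1 hl'
    exact List.pairwise_replicate.2 (Or.inl (hm i))
  · refine List.Pairwise.map _ ?_ (List.pairwise_lt_finRange n)
    intro a b hab x hx y hy
    rw [List.eq_of_mem_replicate hx, List.eq_of_mem_replicate hy]
    exact hab

lemma eq_bsOf_iff_le {n : ℕ} (m : Fin n →₀ ℕ) (xs : List (Fin n)) :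
    (xs.Chain' (· ≤ ·) ∧ (↑xs : Multiset (Fin n)) = Finsupp.toMultiset m) ↔ xs = bsOf n m := by
  constructor
  · rintro ⟨hc, hm⟩
    refine List.Perm.eq_of_pairwise' ?_
      (bsOf_pairwise_le m) (Multiset.coe_eq_coe.1 (hm.trans (bsOf_coe m).symm))
    exact List.isChain_iff_pairwise.1 hc
  · rintro rfl
    exact ⟨(bsOf_pairwise_le m).isChain, bsOf_coe m⟩

lemma eq_bsOf_iff_lt {n : ℕ} (m : Fin n →₀ ℕ) (hm : ∀ i, m i ≤ 1) (xs : List (Fin n)) :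
    (xs.Chain' (· < ·) ∧ (↑xs : Multiset (Fin n)) = Finsupp.toMultiset m) ↔ xs = bsOf n m := by
  constructor
  · rintro ⟨hc, hmm⟩
    exact (eq_bsOf_iff_le m xs).1 ⟨hc.imp (fun _ _ h => le_of_lt h), hmm⟩
  · rintro rfl
    exact ⟨(bsOf_pairwise_lt m hm).isChain, bsOf_coe m⟩

end JMaux

namespace JMaux

open Finset in
lemma evalJM_esymm (n c : ℕ) :
    evalJM n (MvPolynomial.esymm (Fin n) ℂ c) =
    ∑ f ∈ Finset.univ.filter (fun f : Fin c → Fin n × Fin n =>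
        (∀ p ∈ List.ofFn f, p.1 < p.2) ∧ ((List.ofFn f).map Prod.snd).Chain' (· < ·)),
      MonoidAlgebra.single (prodT n (List.ofFn f)) 1 := by
  rw [MvPolynomial.esymm, evalJM_sum]
  have hterm : ∀ t ∈ powersetCard c (univ : Finset (Fin n)),
      evalJM n (∏ i ∈ t, MvPolynomial.X i) =
      ∑ f ∈ Finset.univ.filter (fun f : Fin c → Fin n × Fin n =>
          (∀ p ∈ List.ofFn f, p.1 < p.2) ∧
          (List.ofFn f).map Prod.snd = bsOf n (Multiset.toFinsupp t.val)),
        MonoidAlgebra.single (prodT n (List.ofFn f)) 1 := by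
    intro t ht
    rw [Finset.prod_eq_multiset_prod, multiset_prod_X, evalJM_monomial, prodJ_eq]
    refine JM_list_prod n _ c ?_
    rw [bsOf_length, Multiset.toFinsupp_toMultiset]
    exact (Finset.mem_powersetCard.1 ht).2
  rw [Finset.sum_congr rfl hterm]
  set A := Finset.univ.filter (fun f : Fin c → Fin n × Fin n =>
      (∀ p ∈ List.ofFn f, p.1 < p.2) ∧ ((List.ofFn f).map Prod.snd).Chain' (· < ·)) with hA
  have hmaps : ∀ f ∈ A, ((List.ofFn f).map Prod.snd).toFinset ∈ powersetCard c (univ : Finset (Fin n)) := by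
    intro f hf
    rw [hA, Finset.mem_filter] at hf
    have hnd : ((List.ofFn f).map Prod.snd).Nodup :=
      (List.isChain_iff_pairwise.1 hf.2.2).imp ne_of_lt
    rw [Finset.mem_powersetCard]
    refine ⟨Finset.subset_univ _, ?_⟩
    rw [List.toFinset_card_of_nodup hnd, List.length_map, List.length_ofFn]
  rw [← Finset.sum_fiberwise_of_maps_to hmaps
    (fun f => MonoidAlgebra.single (prodT n (List.ofFn f)) (1:ℂ))]
  refine Finset.sum_congr rfl fun t ht => ?_
  refine Finset.sum_congr ?_ fun _ _ => rfl
  ext f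
  rw [Finset.mem_filter, hA, Finset.mem_filter, Finset.mem_filter]
  simp only [Finset.mem_univ, true_and]
  have hcnt : ∀ i, Multiset.toFinsupp t.val i ≤ 1 := by
    intro i
    rw [Multiset.toFinsupp_apply]
    exact Multiset.nodup_iff_count_le_one.1 t.nodup i
  constructor
  · rintro ⟨hlt, hbs⟩
    have h2 := (eq_bsOf_iff_lt _ hcnt ((List.ofFn f).map Prod.snd)).2 hbs
    rw [Multiset.toFinsupp_toMultiset] at h2
    refine ⟨⟨hlt, h2.1⟩, ?_⟩
    rw [← List.toFinset_coe, h2.2, Finset.val_toFinset]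
  · rintro ⟨⟨hlt, hch⟩, hfin⟩
    refine ⟨hlt, (eq_bsOf_iff_lt _ hcnt _).1 ⟨hch, ?_⟩⟩
    rw [Multiset.toFinsupp_toMultiset]
    have hnd : ((List.ofFn f).map Prod.snd).Nodup :=
      (List.isChain_iff_pairwise.1 hch).imp ne_of_lt
    calc (↑((List.ofFn f).map Prod.snd) : Multiset (Fin n))
        = (↑((List.ofFn f).map Prod.snd) : Multiset (Fin n)).dedup :=
          (Multiset.dedup_eq_self.2 (Multiset.coe_nodup.2 hnd)).symm
      _ = ((↑((List.ofFn f).map Prod.snd) : Multiset (Fin n)).toFinset).val := rfl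
      _ = t.val := by rw [List.toFinset_coe, hfin]

end JMaux

namespace JMaux

def symOf (n d : ℕ) (f : Fin d → Fin n × Fin n) : Sym (Fin n) d :=
  ⟨(↑((List.ofFn f).map Prod.snd) : Multiset (Fin n)),
    by rw [Multiset.coe_card, List.length_map, List.length_ofFn]⟩

open Finset in
lemma evalJM_hsymm (n d : ℕ) :
    evalJM n (MvPolynomial.hsymm (Fin n) ℂ d) =
    ∑ f ∈ Finset.univ.filter (fun f : Fin d → Fin n × Fin n =>
        (∀ p ∈ List.ofFn f, p.1 < p.2) ∧ ((List.ofFn f).map Prod.snd).Chain' (· ≤ ·)),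
      MonoidAlgebra.single (prodT n (List.ofFn f)) 1 := by
  rw [MvPolynomial.hsymm, evalJM_sum]
  have hterm : ∀ s ∈ (Finset.univ : Finset (Sym (Fin n) d)),
      evalJM n ((s.1.map MvPolynomial.X).prod) =
      ∑ f ∈ Finset.univ.filter (fun f : Fin d → Fin n × Fin n =>
          (∀ p ∈ List.ofFn f, p.1 < p.2) ∧
          (List.ofFn f).map Prod.snd = bsOf n (Multiset.toFinsupp s.1)),
        MonoidAlgebra.single (prodT n (List.ofFn f)) 1 := by
    intro s _
    rw [multiset_prod_X, evalJM_monomial, prodJ_eq]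
    refine JM_list_prod n _ d ?_
    rw [bsOf_length, Multiset.toFinsupp_toMultiset]
    exact s.2
  rw [Finset.sum_congr rfl hterm]
  rw [← Finset.sum_fiberwise_of_maps_to
    (g := symOf n d)
    (fun f _ => Finset.mem_univ _)
    (fun f => MonoidAlgebra.single (prodT n (List.ofFn f)) (1:ℂ))]
  refine Finset.sum_congr rfl fun s _ => ?_
  refine Finset.sum_congr ?_ fun _ _ => rfl
  ext f
  rw [Finset.mem_filter, Finset.mem_filter, Finset.mem_filter]
  simp only [Finset.mem_univ, true_and]
  constructor
  · rintro ⟨hlt, hbs⟩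
    have h2 := (eq_bsOf_iff_le (Multiset.toFinsupp s.1) ((List.ofFn f).map Prod.snd)).2 hbs
    rw [Multiset.toFinsupp_toMultiset] at h2
    exact ⟨⟨hlt, h2.1⟩, Subtype.ext h2.2⟩
  · rintro ⟨⟨hlt, hch⟩, hgf⟩
    refine ⟨hlt, (eq_bsOf_iff_le _ _).1 ⟨hch, ?_⟩⟩
    rw [Multiset.toFinsupp_toMultiset]
    exact congrArg Subtype.val hgf

end JMaux

namespace JMaux

lemma IMM_nil (n : ℕ) (L : List (Fin n × Fin n)) :
    IsMultimonotonic n [] [] L ↔ L = [] := by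
  constructor
  · rintro ⟨-, B, C, hL, hB, hC, -, -⟩
    rw [List.map_eq_nil_iff] at hB hC
    subst hB; subst hC
    simpa using hL
  · rintro rfl
    exact ⟨by simp, [], [], by simp, rfl, rfl, by simp, by simp⟩

lemma IMM_cons_left (n : ℕ) (c : ℕ) (cs ds : List ℕ) (L1 L : List (Fin n × Fin n))
    (h1 : L1.length = c) :
    IsMultimonotonic n (c :: cs) ds (L1 ++ L) ↔
    ((∀ p ∈ L1, p.1 < p.2) ∧ (L1.map Prod.snd).Chain' (· < ·)) ∧
      IsMultimonotonic n cs ds L := by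
  constructor
  · rintro ⟨hlt, B, C, hL, hB, hC, hBc, hCc⟩
    cases B with
    | nil => simp at hB
    | cons β B' =>
      rw [List.map_cons, List.cons.injEq] at hB
      rw [List.cons_append, List.flatten_cons] at hL
      have hlen : L1.length = β.length := by rw [h1, hB.1]
      obtain ⟨rfl, rfl⟩ := List.append_inj hL hlen
      refine ⟨⟨fun p hp => hlt p (List.mem_append_left _ hp), hBc _ List.mem_cons_self⟩,
        fun p hp => hlt p (List.mem_append_right _ hp), B', C, rfl, hB.2, hC,
        fun β' hβ' => hBc β' (List.mem_cons_of_mem _ hβ'),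
        hCc⟩
  · rintro ⟨⟨hlt1, hch1⟩, hlt2, B, C, hL, hB, hC, hBc, hCc⟩
    refine ⟨?_, L1 :: B, C, ?_, ?_, hC, ?_, hCc⟩
    · intro p hp
      rcases List.mem_append.1 hp with h | h
      · exact hlt1 p h
      · exact hlt2 p h
    · rw [List.cons_append, List.flatten_cons, hL]
    · rw [List.map_cons, h1, hB]
    · intro β hβ
      rcases List.mem_cons.1 hβ with rfl | h
      · exact hch1
      · exact hBc β h

lemma IMM_cons_right (n : ℕ) (d : ℕ) (ds : List ℕ) (L1 L : List (Fin n × Fin n))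
    (h1 : L1.length = d) :
    IsMultimonotonic n [] (d :: ds) (L1 ++ L) ↔
    ((∀ p ∈ L1, p.1 < p.2) ∧ (L1.map Prod.snd).Chain' (· ≤ ·)) ∧
      IsMultimonotonic n [] ds L := by
  constructor
  · rintro ⟨hlt, B, C, hL, hB, hC, hBc, hCc⟩
    rw [List.map_eq_nil_iff] at hB
    subst hB
    cases C with
    | nil => simp at hC
    | cons γ C' =>
      rw [List.map_cons, List.cons.injEq] at hC
      rw [List.nil_append, List.flatten_cons] at hL
      have hlen : L1.length = γ.length := by rw [h1, hC.1]
      have hL' : L1 ++ L = γ ++ C'.flatten := by simpa using hL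
      obtain ⟨rfl, rfl⟩ := List.append_inj hL' hlen
      refine ⟨⟨fun p hp => hlt p (List.mem_append_left _ hp), hCc _ List.mem_cons_self⟩,
        fun p hp => hlt p (List.mem_append_right _ hp), [], C', by simp, rfl, hC.2,
        by simp, fun γ' hγ' => hCc γ' (List.mem_cons_of_mem _ hγ')⟩
  · rintro ⟨⟨hlt1, hch1⟩, hlt2, B, C, hL, hB, hC, hBc, hCc⟩
    rw [List.map_eq_nil_iff] at hB
    subst hB
    refine ⟨?_, [], L1 :: C, ?_, rfl, ?_, by simp, ?_⟩
    · intro p hp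
      rcases List.mem_append.1 hp with h | h
      · exact hlt1 p h
      · exact hlt2 p h
    · rw [List.nil_append, List.flatten_cons]
      simpa using hL
    · rw [List.map_cons, h1, hC]
    · intro γ hγ
      rcases List.mem_cons.1 hγ with rfl | h
      · exact hch1
      · exact hCc γ h

end JMaux

namespace JMaux

lemma sum_split {M : Type*} [AddCommMonoid M] {X : Type*} [Fintype X] (k1 k2 : ℕ)
    (F : List X → M) :
    ∑ f : Fin (k1 + k2) → X, F (List.ofFn f) =
    ∑ u : Fin k1 → X, ∑ g : Fin k2 → X, F (List.ofFn u ++ List.ofFn g) := by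
  rw [← Finset.sum_product', Finset.univ_product_univ]
  refine Fintype.sum_equiv ((Equiv.arrowCongr finSumFinEquiv.symm (Equiv.refl X)).trans
    (Equiv.sumArrowEquivProdArrow _ _ X)) _ _ fun f => ?_
  rw [List.ofFn_add]
  rfl

lemma main (n : ℕ) (cs ds : List ℕ) (k : ℕ) (hk : cs.sum + ds.sum = k) :
    (cs.map fun c => evalJM n (MvPolynomial.esymm (Fin n) ℂ c)).prod *
      (ds.map fun d => evalJM n (MvPolynomial.hsymm (Fin n) ℂ d)).prod =
      ∑ f ∈ Finset.univ.filter
          (fun f : Fin k → Fin n × Fin n => IsMultimonotonic n cs ds (List.ofFn f)),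
        MonoidAlgebra.single (prodT n (List.ofFn f)) 1 := by
  induction cs generalizing k with
  | nil =>
    rw [List.map_nil, List.prod_nil, one_mul]
    simp only [List.sum_nil, zero_add] at hk
    induction ds generalizing k with
    | nil =>
      simp only [List.sum_nil] at hk
      subst hk
      rw [Finset.filter_true_of_mem (fun f _ => by
        rw [List.ofFn_zero]
        exact (IMM_nil n []).2 rfl)]
      rw [Finset.univ_unique, Finset.sum_singleton]
      simp [prodT, MonoidAlgebra.one_def]
    | cons d ds' IH =>
      rw [List.sum_cons] at hk
      subst hk
      rw [List.map_cons, List.prod_cons, evalJM_hsymm, IH ds'.sum rfl,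
        Finset.sum_filter, Finset.sum_filter, Finset.sum_mul_sum, Finset.sum_filter]
      rw [sum_split d ds'.sum (fun L => if IsMultimonotonic n [] (d :: ds') L then
        MonoidAlgebra.single (prodT n L) (1:ℂ) else 0)]
      refine Finset.sum_congr rfl fun u _ => Finset.sum_congr rfl fun g _ => ?_
      rw [ite_zero_mul_ite_zero, MonoidAlgebra.single_mul_single, mul_one, ← prodT_append]
      refine if_congr ?_ rfl rfl
      exact (IMM_cons_right n d ds' (List.ofFn u) (List.ofFn g) (List.length_ofFn (f := u))).symm
  | cons c cs' IH =>
    have hk2 : c + (cs'.sum + ds.sum) = k := by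
      rw [← hk, List.sum_cons]; ring
    subst hk2
    rw [List.map_cons, List.prod_cons, mul_assoc, evalJM_esymm, IH (cs'.sum + ds.sum) rfl,
      Finset.sum_filter, Finset.sum_filter, Finset.sum_mul_sum, Finset.sum_filter]
    rw [sum_split c (cs'.sum + ds.sum) (fun L => if IsMultimonotonic n (c :: cs') ds L then
      MonoidAlgebra.single (prodT n L) (1:ℂ) else 0)]
    refine Finset.sum_congr rfl fun u _ => Finset.sum_congr rfl fun g _ => ?_
    rw [ite_zero_mul_ite_zero, MonoidAlgebra.single_mul_single, mul_one, ← prodT_append]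
    refine if_congr ?_ rfl rfl
    exact (IMM_cons_left n c cs' ds (List.ofFn u) (List.ofFn g) (List.length_ofFn (f := u))).symm

end JMaux

/-- The product `e_{c_1}(J) ⋯ e_{c_l}(J) · h_{d_1}(J) ⋯ h_{d_m}(J)` of elementary and complete
homogeneous symmetric polynomials evaluated at the Jucys–Murphy elements equals the sum, in
`ℂ[S_n]`, of the products `(a_1 b_1) ⋯ (a_k b_k)` over all multimonotonic sequences of
transpositions of type `((c_1,…,c_l), (d_1,…,d_m))`, where `k = ∑ c_a + ∑ d_b`. -/
theorem prod_esymm_hsymm_JM_eq_sum_multimonotonic (n : ℕ) (hn : 1 ≤ n) (cs ds : List ℕ) :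
    (cs.map fun c => evalJM n (MvPolynomial.esymm (Fin n) ℂ c)).prod *
      (ds.map fun d => evalJM n (MvPolynomial.hsymm (Fin n) ℂ d)).prod =
      ∑ f ∈ Finset.univ.filter
          (fun f : Fin (cs.sum + ds.sum) → Fin n × Fin n =>
            IsMultimonotonic n cs ds (List.ofFn f)),
        MonoidAlgebra.single (prodT n (List.ofFn f)) 1 :=
  JMaux.main n cs ds _ rfl
end

section
/- Let n ≥ 1, let c_1,…,c_l and d_1,…,d_m be nonnegative integers with k := Σ_{a=1}^l c_a + Σ_{b=1}^m d_b, and let K be a conjugacy class of S_n. If g and g' are conjugate elements of S_n, then the number of multimonotonic sequences of transpositions ((a_1 b_1),…,(a_k b_k)) of type ((c_1,…,c_l),(d_1,…,d_m)) such that (a_1 b_1)(a_2 b_2)⋯(a_k b_k)·g ∈ K is equal to the number of such sequences with (a_1 b_1)(a_2 b_2)⋯(a_k b_k)·g' ∈ K. In other words, the multimonotonic path count from the conjugacy class of g to K is well-defined, depending only on the conjugacy class (cycle type) of g. -/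
noncomputable section MMaux
open Equiv List MonoidAlgebra
open scoped Classical

variable {n : ℕ}

abbrev MMA (n : ℕ) := MonoidAlgebra ℤ (Equiv.Perm (Fin n))

def dd {n : ℕ} (σ : Equiv.Perm (Fin n)) : MMA n := MonoidAlgebra.single σ 1

lemma dd_mul (σ τ : Equiv.Perm (Fin n)) : dd σ * dd τ = dd (σ * τ) := by
  simp [dd, MonoidAlgebra.single_mul_single]

lemma dd_one : dd (1 : Equiv.Perm (Fin n)) = 1 := rfl

def XX (j : Fin n) : MMA n := ∑ i : Fin n, if i < j then dd (Equiv.swap i j) else 0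

/-- conjugation of swap pushed through -/
lemma swap_mul_swap_eq (u v i j : Fin n) (hu : u ≠ j) (hv : v ≠ j) :
    Equiv.swap u v * Equiv.swap i j = Equiv.swap (Equiv.swap u v i) j * Equiv.swap u v := by
  have h := Equiv.swap_apply_apply (Equiv.swap u v) i j
  rw [Equiv.swap_apply_of_ne_of_ne hu.symm hv.symm] at h
  rw [h]
  group

lemma comm_swap_XX {u v j : Fin n} (hu : u ≠ j) (hv : v ≠ j) (h : u < j ↔ v < j) :
    dd (Equiv.swap u v) * XX j = XX j * dd (Equiv.swap u v) := by
  rw [XX, Finset.mul_sum, Finset.sum_mul]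
  rw [← Equiv.sum_comp (Equiv.swap u v)
    (fun i => (if i < j then dd (Equiv.swap i j) else 0) * dd (Equiv.swap u v))]
  refine Finset.sum_congr rfl fun i _ => ?_
  have hlt : i < j ↔ Equiv.swap u v i < j := by
    rcases eq_or_ne i u with rfl | hiu
    · rw [Equiv.swap_apply_left]; exact h
    rcases eq_or_ne i v with rfl | hiv
    · rw [Equiv.swap_apply_right]; exact h.symm
    · rw [Equiv.swap_apply_of_ne_of_ne hiu hiv]
  by_cases hij : i < j
  · rw [if_pos hij, if_pos (hlt.1 hij), dd_mul, dd_mul,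
      swap_mul_swap_eq u v i j hu hv]
  · rw [if_neg hij, if_neg (fun hc => hij (hlt.2 hc)), zero_mul, mul_zero]

lemma XX_comm_of_lt {i j : Fin n} (hij : i < j) : Commute (XX i) (XX j) :=
  Commute.sum_left _ _ _ (fun a _ => by
    by_cases ha : a < i
    · rw [if_pos ha]
      exact comm_swap_XX (ne_of_lt (ha.trans hij)) (ne_of_lt hij)
        (iff_of_true (ha.trans hij) hij)
    · rw [if_neg ha]
      exact Commute.zero_left _)

lemma XX_comm (i j : Fin n) : XX i * XX j = XX j * XX i := by
  rcases lt_trichotomy i j with hij | rfl | hij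
  · exact XX_comm_of_lt hij
  · rfl
  · exact (XX_comm_of_lt hij).symm.eq
lemma sum_ite_lt_succ {u v : Fin n} (huv : (u : ℕ) + 1 = v) (G : Fin n → MMA n) :
    (∑ i : Fin n, if i < v then G i else 0) =
      G u + ∑ i : Fin n, if i < u then G i else 0 := by
  have key : ∀ i : Fin n, (if i < v then G i else 0) =
      (if i = u then G i else 0) + (if i < u then G i else 0) := by
    intro i
    have h1 : i < v ↔ i = u ∨ i < u := by
      rw [Fin.lt_def, Fin.lt_def, Fin.ext_iff]; omega
    by_cases h2 : i = u
    · have : i < v := h1.2 (Or.inl h2)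
      have h3 : ¬ i < u := by rw [h2]; exact lt_irrefl u
      rw [if_pos this, if_pos h2, if_neg h3, add_zero]
    · by_cases h3 : i < u
      · rw [if_pos (h1.2 (Or.inr h3)), if_neg h2, if_pos h3, zero_add]
      · rw [if_neg (fun hc => by rcases h1.1 hc with h | h <;> [exact h2 h; exact h3 h]),
          if_neg h2, if_neg h3, add_zero]
  rw [Finset.sum_congr rfl (fun i _ => key i), Finset.sum_add_distrib,
    Finset.sum_ite_eq' Finset.univ u G, if_pos (Finset.mem_univ u)]

lemma dd_mul_XX (σ : Equiv.Perm (Fin n)) (j : Fin n) :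
    dd σ * XX j = ∑ i : Fin n, if i < j then dd (σ * Equiv.swap i j) else 0 := by
  rw [XX, Finset.mul_sum]
  exact Finset.sum_congr rfl fun i _ => by rw [mul_ite, mul_zero, dd_mul]

lemma XX_mul_dd (σ : Equiv.Perm (Fin n)) (j : Fin n) :
    XX j * dd σ = ∑ i : Fin n, if i < j then dd (Equiv.swap i j * σ) else 0 := by
  rw [XX, Finset.sum_mul]
  exact Finset.sum_congr rfl fun i _ => by rw [ite_mul, zero_mul, dd_mul]

lemma conj_helper (σ : Equiv.Perm (Fin n)) (i j : Fin n) :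
    σ * Equiv.swap i j = Equiv.swap (σ i) (σ j) * σ := by
  rw [Equiv.swap_apply_apply]; group

section Adj
variable {u v : Fin n} (huv : (u : ℕ) + 1 = v)

include huv

lemma adj_lt : u < v := by rw [Fin.lt_def]; omega

lemma adj_ne : u ≠ v := ne_of_lt (adj_lt huv)

lemma s_mul_XXv : dd (Equiv.swap u v) * XX v = XX u * dd (Equiv.swap u v) + 1 := by
  rw [dd_mul_XX, sum_ite_lt_succ huv, Equiv.swap_mul_self, dd_one, XX_mul_dd, add_comm]
  congr 1
  refine Finset.sum_congr rfl fun i _ => ?_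
  by_cases hi : i < u
  · rw [if_pos hi, if_pos hi]
    have hiu : i ≠ u := ne_of_lt hi
    have hiv : i ≠ v := ne_of_lt (hi.trans (adj_lt huv))
    rw [conj_helper (Equiv.swap u v) i v, Equiv.swap_apply_of_ne_of_ne hiu hiv,
      Equiv.swap_apply_right]
  · rw [if_neg hi, if_neg hi]

lemma s_mul_XXu : XX v * dd (Equiv.swap u v) = dd (Equiv.swap u v) * XX u + 1 := by
  rw [XX_mul_dd, sum_ite_lt_succ huv, Equiv.swap_mul_self, dd_one, dd_mul_XX, add_comm]
  congr 1
  refine Finset.sum_congr rfl fun i _ => ?_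
  by_cases hi : i < u
  · rw [if_pos hi, if_pos hi]
    have hiu : i ≠ u := ne_of_lt hi
    have hiv : i ≠ v := ne_of_lt (hi.trans (adj_lt huv))
    rw [conj_helper (Equiv.swap u v) i u, Equiv.swap_apply_of_ne_of_ne hiu hiv,
      Equiv.swap_apply_left]
  · rw [if_neg hi, if_neg hi]

lemma s_comm_add :
    dd (Equiv.swap u v) * (XX u + XX v) = (XX u + XX v) * dd (Equiv.swap u v) := by
  have hA := s_mul_XXv huv
  have hB := s_mul_XXu huv
  rw [mul_add, add_mul, hA, hB]
  abel

lemma s_comm_mulXX :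
    dd (Equiv.swap u v) * (XX u * XX v) = (XX u * XX v) * dd (Equiv.swap u v) := by
  have hA := s_mul_XXv huv
  have h1 : dd (Equiv.swap u v) * XX u = XX v * dd (Equiv.swap u v) - 1 := by
    rw [eq_sub_iff_add_eq, ← s_mul_XXu huv]
  calc dd (Equiv.swap u v) * (XX u * XX v)
      = (dd (Equiv.swap u v) * XX u) * XX v := (mul_assoc _ _ _).symm
    _ = (XX v * dd (Equiv.swap u v) - 1) * XX v := by rw [h1]
    _ = XX v * (dd (Equiv.swap u v) * XX v) - XX v := by
        rw [sub_mul, one_mul, mul_assoc]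
    _ = XX v * (XX u * dd (Equiv.swap u v) + 1) - XX v := by rw [hA]
    _ = XX v * (XX u * dd (Equiv.swap u v)) := by
        rw [mul_add, mul_one, add_sub_cancel_right]
    _ = (XX u * XX v) * dd (Equiv.swap u v) := by
        rw [← mul_assoc, XX_comm, mul_assoc]

end Adj
def erec : List (MMA n) → ℕ → MMA n
  | _, 0 => 1
  | [], _ + 1 => 0
  | x :: l, c + 1 => erec l (c + 1) + x * erec l c

def hrec : List (MMA n) → ℕ → MMA n
  | _, 0 => 1
  | [], _ + 1 => 0
  | x :: l, d + 1 => hrec l (d + 1) + x * hrec (x :: l) d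
  termination_by l d => (l.length, d)

@[simp] lemma erec_zero (l : List (MMA n)) : erec l 0 = 1 := by cases l <;> rfl
@[simp] lemma hrec_zero (l : List (MMA n)) : hrec l 0 = 1 := by cases l <;> rw [hrec]
@[simp] lemma erec_nil (c : ℕ) : erec ([] : List (MMA n)) (c + 1) = 0 := rfl
@[simp] lemma hrec_nil (c : ℕ) : hrec ([] : List (MMA n)) (c + 1) = 0 := by rw [hrec]

lemma erec_cons (x : MMA n) (l : List (MMA n)) (c : ℕ) :
    erec (x :: l) (c + 1) = erec l (c + 1) + x * erec l c := rfl

lemma hrec_cons (x : MMA n) (l : List (MMA n)) (d : ℕ) :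
    hrec (x :: l) (d + 1) = hrec l (d + 1) + x * hrec (x :: l) d := by rw [hrec]

section Mem
variable {S : Subalgebra ℤ (MMA n)}

lemma erec_mem : ∀ (l : List (MMA n)), (∀ x ∈ l, x ∈ S) → ∀ c, erec l c ∈ S := by
  intro l
  induction l with
  | nil => intro _ c; cases c <;> simp [one_mem, zero_mem]
  | cons x l ih =>
      intro h c
      cases c with
      | zero => simpa using one_mem S
      | succ c =>
          rw [erec_cons]
          exact add_mem (ih (fun z hz => h z (List.mem_cons_of_mem _ hz)) _)
            (mul_mem (h x (List.mem_cons_self))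
              (ih (fun z hz => h z (List.mem_cons_of_mem _ hz)) _))

lemma hrec_mem : ∀ (l : List (MMA n)), (∀ x ∈ l, x ∈ S) → ∀ c, hrec l c ∈ S := by
  intro l
  induction l with
  | nil => intro _ c; cases c <;> simp [one_mem, zero_mem]
  | cons x l ih =>
      intro h c
      induction c with
      | zero => simpa using one_mem S
      | succ c ihc =>
          rw [hrec_cons]
          exact add_mem (ih (fun z hz => h z (List.mem_cons_of_mem _ hz)) _)
            (mul_mem (h x (List.mem_cons_self)) ihc)

variable {x y : MMA n} {r : List (MMA n)}

lemma erec_pair_one (x y : MMA n) (r : List (MMA n)) :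
    erec (x :: y :: r) 1 = erec r 1 + (x + y) := by
  rw [erec_cons, erec_cons, erec_zero, erec_zero, mul_one, mul_one]
  abel

lemma erec_pair_two (x y : MMA n) (r : List (MMA n)) (c : ℕ) :
    erec (x :: y :: r) (c + 2) =
      erec r (c + 2) + (x + y) * erec r (c + 1) + (x * y) * erec r c := by
  rw [erec_cons, erec_cons, erec_cons, mul_add, add_mul, ← mul_assoc]
  abel

lemma hrec_pair_one (x y : MMA n) (r : List (MMA n)) :
    hrec (x :: y :: r) 1 = hrec r 1 + (x + y) := by
  rw [hrec_cons, hrec_cons, hrec_zero, hrec_zero, mul_one, mul_one]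
  abel

lemma hrec_pair_rec (hxy : x * y = y * x) (d : ℕ) :
    hrec (x :: y :: r) (d + 2) =
      hrec r (d + 2) + (x + y) * hrec (x :: y :: r) (d + 1)
        - (x * y) * hrec (x :: y :: r) d := by
  have e1 : hrec (x :: y :: r) (d + 2)
      = hrec (y :: r) (d + 2) + x * hrec (x :: y :: r) (d + 1) := hrec_cons _ _ _
  have e2 : hrec (y :: r) (d + 2) = hrec r (d + 2) + y * hrec (y :: r) (d + 1) :=
    hrec_cons _ _ _
  have e3 : hrec (x :: y :: r) (d + 1)
      = hrec (y :: r) (d + 1) + x * hrec (x :: y :: r) d := hrec_cons _ _ _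
  rw [e1, e2, e3, add_mul, mul_add, mul_add]
  rw [← mul_assoc y x, ← hxy, mul_assoc x y]
  abel

lemma erec_pair_mem (h1 : x + y ∈ S) (h2 : x * y ∈ S) (hr : ∀ z ∈ r, z ∈ S) :
    ∀ c, erec (x :: y :: r) c ∈ S := by
  intro c
  match c with
  | 0 => simpa using one_mem S
  | 1 => rw [erec_pair_one]; exact add_mem (erec_mem r hr 1) h1
  | (c + 2) =>
      rw [erec_pair_two]
      exact add_mem (add_mem (erec_mem r hr _) (mul_mem h1 (erec_mem r hr _)))
        (mul_mem h2 (erec_mem r hr _))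

lemma hrec_pair_mem (hxy : x * y = y * x) (h1 : x + y ∈ S) (h2 : x * y ∈ S)
    (hr : ∀ z ∈ r, z ∈ S) : ∀ d, hrec (x :: y :: r) d ∈ S := by
  intro d
  induction d using Nat.twoStepInduction with
  | zero => simpa using one_mem S
  | one => rw [hrec_pair_one]; exact add_mem (hrec_mem r hr 1) h1
  | more d ih1 ih2 =>
      rw [hrec_pair_rec hxy]
      exact sub_mem (add_mem (hrec_mem r hr _) (mul_mem h1 ih2)) (mul_mem h2 ih1)

lemma erec_append_mem (h1 : x + y ∈ S) (h2 : x * y ∈ S) (hr : ∀ z ∈ r, z ∈ S) :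
    ∀ (p : List (MMA n)), (∀ z ∈ p, z ∈ S) → ∀ c, erec (p ++ x :: y :: r) c ∈ S := by
  intro p
  induction p with
  | nil => intro _ c; exact erec_pair_mem h1 h2 hr c
  | cons z p ih =>
      intro hp c
      cases c with
      | zero => simpa using one_mem S
      | succ c =>
          rw [List.cons_append, erec_cons]
          exact add_mem (ih (fun w hw => hp w (List.mem_cons_of_mem _ hw)) _)
            (mul_mem (hp z (List.mem_cons_self))
              (ih (fun w hw => hp w (List.mem_cons_of_mem _ hw)) _))

lemma hrec_append_mem (hxy : x * y = y * x) (h1 : x + y ∈ S) (h2 : x * y ∈ S)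
    (hr : ∀ z ∈ r, z ∈ S) :
    ∀ (p : List (MMA n)), (∀ z ∈ p, z ∈ S) → ∀ c, hrec (p ++ x :: y :: r) c ∈ S := by
  intro p
  induction p with
  | nil => intro _ c; exact hrec_pair_mem hxy h1 h2 hr c
  | cons z p ih =>
      intro hp c
      induction c with
      | zero => simpa using one_mem S
      | succ c ihc =>
          rw [List.cons_append, hrec_cons]
          exact add_mem (ih (fun w hw => hp w (List.mem_cons_of_mem _ hw)) _)
            (mul_mem (hp z (List.mem_cons_self)) ihc)

end Mem
lemma mem_cent_iff {s x : MMA n} :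
    x ∈ Subalgebra.centralizer ℤ {s} ↔ s * x = x * s := by
  rw [Subalgebra.mem_centralizer_iff]
  simp

lemma XX_mem_cent {u v i : Fin n} (huv : (u : ℕ) + 1 = v) (hu : i ≠ u) (hv : i ≠ v) :
    XX i ∈ Subalgebra.centralizer ℤ {dd (Equiv.swap u v)} := by
  rw [mem_cent_iff]
  refine comm_swap_XX (fun hc => hu hc.symm) (fun hc => hv hc.symm) ?_
  rw [Fin.lt_def, Fin.lt_def]
  have hu' : (i : ℕ) ≠ (u : ℕ) := fun hc => hu (Fin.ext hc)
  have hv' : (i : ℕ) ≠ (v : ℕ) := fun hc => hv (Fin.ext hc)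
  omega

lemma finRange_decomp {N : ℕ} (u v : Fin N) (huv : (u : ℕ) + 1 = v) :
    List.finRange N =
      (List.finRange N).take u.val ++ u :: v :: (List.finRange N).drop (u.val + 2) := by
  have h1 : u.val < (List.finRange N).length := by rw [List.length_finRange]; exact u.2
  have h2 : u.val + 1 < (List.finRange N).length := by
    rw [List.length_finRange]; rw [huv]; exact v.2
  conv_lhs => rw [← List.take_append_drop u.val (List.finRange N)]
  congr 1
  rw [List.drop_eq_getElem_cons h1, List.drop_eq_getElem_cons h2]
  congr 1
  · simp [List.getElem_finRange, Fin.ext_iff]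
  congr 1
  · simp [List.getElem_finRange, Fin.ext_iff]; omega

lemma central_block_adj {N : ℕ} {u v : Fin N} (huv : (u : ℕ) + 1 = v) (c : ℕ)
    (F : List (MMA N) → ℕ → MMA N)
    (hF : ∀ (p r : List (MMA N)),
      (∀ z ∈ p, z ∈ Subalgebra.centralizer ℤ {dd (Equiv.swap u v)}) →
      (∀ z ∈ r, z ∈ Subalgebra.centralizer ℤ {dd (Equiv.swap u v)}) →
      ∀ c, F (p ++ XX u :: XX v :: r) c ∈
        Subalgebra.centralizer ℤ {dd (Equiv.swap u v)}) :
    F ((List.finRange N).map XX) c ∈ Subalgebra.centralizer ℤ {dd (Equiv.swap u v)} := by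
  have hd := finRange_decomp u v huv
  have hnd := List.nodup_finRange N
  rw [hd] at hnd
  rw [List.nodup_append] at hnd
  obtain ⟨-, hnd2, hdisj⟩ := hnd
  rw [List.nodup_cons] at hnd2
  obtain ⟨hu2, hnd3⟩ := hnd2
  rw [List.nodup_cons] at hnd3
  obtain ⟨hv2, -⟩ := hnd3
  have key : F ((((List.finRange N).take u.val).map XX) ++
      XX u :: XX v :: ((List.finRange N).drop (u.val + 2)).map XX) c ∈
      Subalgebra.centralizer ℤ {dd (Equiv.swap u v)} := by
    refine hF _ _ ?_ ?_ c
    · intro z hz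
      obtain ⟨i, hi, rfl⟩ := List.mem_map.1 hz
      have := fun hm => hdisj i hi i hm rfl
      refine XX_mem_cent huv ?_ ?_
      · intro hc; exact this (hc ▸ List.mem_cons_self)
      · intro hc; exact this (hc ▸ List.mem_cons_of_mem _ (List.mem_cons_self))
    · intro z hz
      obtain ⟨i, hi, rfl⟩ := List.mem_map.1 hz
      refine XX_mem_cent huv ?_ ?_
      · intro hc; subst hc; exact hu2 (List.mem_cons_of_mem _ hi)
      · intro hc; subst hc; exact hv2 hi
  have heq : ((List.finRange N).map XX) = (((List.finRange N).take u.val).map XX) ++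
      XX u :: XX v :: ((List.finRange N).drop (u.val + 2)).map XX := by
    conv_lhs => rw [hd]
    simp
  rw [heq]
  exact key

lemma erec_jm_adj {N : ℕ} {u v : Fin N} (huv : (u : ℕ) + 1 = v) (c : ℕ) :
    dd (Equiv.swap u v) * erec ((List.finRange N).map XX) c =
      erec ((List.finRange N).map XX) c * dd (Equiv.swap u v) := by
  rw [← mem_cent_iff]
  exact central_block_adj huv c erec (fun p r hp hr c =>
    erec_append_mem (mem_cent_iff.2 (s_comm_add huv)) (mem_cent_iff.2 (s_comm_mulXX huv))
      hr p hp c)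

lemma hrec_jm_adj {N : ℕ} {u v : Fin N} (huv : (u : ℕ) + 1 = v) (c : ℕ) :
    dd (Equiv.swap u v) * hrec ((List.finRange N).map XX) c =
      hrec ((List.finRange N).map XX) c * dd (Equiv.swap u v) := by
  rw [← mem_cent_iff]
  exact central_block_adj huv c hrec (fun p r hp hr c =>
    hrec_append_mem (XX_comm u v) (mem_cent_iff.2 (s_comm_add huv))
      (mem_cent_iff.2 (s_comm_mulXX huv)) hr p hp c)

lemma dd_comm_all {N : ℕ} (E : MMA (N + 1))
    (hE : ∀ u v : Fin (N + 1), (u : ℕ) + 1 = v →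
      dd (Equiv.swap u v) * E = E * dd (Equiv.swap u v)) :
    ∀ σ : Equiv.Perm (Fin (N + 1)), dd σ * E = E * dd σ := by
  intro σ
  have hσ : σ ∈ Submonoid.closure
      (Set.range fun i : Fin N => Equiv.swap i.castSucc i.succ) := by
    rw [Equiv.Perm.mclosure_swap_castSucc_succ]; trivial
  induction hσ using Submonoid.closure_induction with
  | mem g hg =>
      obtain ⟨i, rfl⟩ := hg
      exact hE i.castSucc i.succ (by simp)
  | one => rw [dd_one, one_mul, mul_one]
  | mul a b ha hb iha ihb =>
      rw [← dd_mul, mul_assoc _ (dd b) E, ihb, ← mul_assoc, iha, mul_assoc]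

lemma erec_jm_comm {N : ℕ} (c : ℕ) (σ : Equiv.Perm (Fin (N + 1))) :
    dd σ * erec ((List.finRange (N + 1)).map XX) c =
      erec ((List.finRange (N + 1)).map XX) c * dd σ :=
  dd_comm_all _ (fun _ _ huv => erec_jm_adj huv c) σ

lemma hrec_jm_comm {N : ℕ} (c : ℕ) (σ : Equiv.Perm (Fin (N + 1))) :
    dd σ * hrec ((List.finRange (N + 1)).map XX) c =
      hrec ((List.finRange (N + 1)).map XX) c * dd σ :=
  dd_comm_all _ (fun _ _ huv => hrec_jm_adj huv c) σ
lemma prodT_nil : prodT n [] = 1 := rfl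

lemma prodT_cons (p : Fin n × Fin n) (L : List (Fin n × Fin n)) :
    prodT n (p :: L) = Equiv.swap p.1 p.2 * prodT n L := by
  simp [prodT]

lemma prodT_append (L M : List (Fin n × Fin n)) :
    prodT n (L ++ M) = prodT n L * prodT n M := by
  simp [prodT]

def CondS (vs : List (Fin n)) (L : List (Fin n × Fin n)) : Prop :=
  (∀ p ∈ L, p.1 < p.2 ∧ p.2 ∈ vs) ∧ (L.map Prod.snd).Chain' (· < ·)

def CondW (vs : List (Fin n)) (L : List (Fin n × Fin n)) : Prop :=
  (∀ p ∈ L, p.1 < p.2 ∧ p.2 ∈ vs) ∧ (L.map Prod.snd).Chain' (· ≤ ·)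

def sumS (vs : List (Fin n)) (c : ℕ) : MMA n :=
  ∑ f : Fin c → Fin n × Fin n,
    if CondS vs (List.ofFn f) then dd (prodT n (List.ofFn f)) else 0

def sumW (vs : List (Fin n)) (c : ℕ) : MMA n :=
  ∑ f : Fin c → Fin n × Fin n,
    if CondW vs (List.ofFn f) then dd (prodT n (List.ofFn f)) else 0

lemma sum_fun_succ (c : ℕ) (F : List (Fin n × Fin n) → MMA n) :
    (∑ f : Fin (c + 1) → Fin n × Fin n, F (List.ofFn f))
      = ∑ q : (Fin n × Fin n) × (Fin c → Fin n × Fin n), F (q.1 :: List.ofFn q.2) := by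
  apply Fintype.sum_equiv (Fin.consEquiv (fun _ => Fin n × Fin n)).symm
  intro f
  have h1 : ((Fin.consEquiv (fun _ => Fin n × Fin n)).symm f).1 = f 0 := rfl
  have h2 : ((Fin.consEquiv (fun _ => Fin n × Fin n)).symm f).2
      = fun i : Fin c => f i.succ := rfl
  rw [h1, h2, List.ofFn_succ]

lemma sumS_zero (vs : List (Fin n)) : sumS vs 0 = 1 := by
  rw [sumS, Fintype.sum_subsingleton _ (fun (i : Fin 0) => (Fin.elim0 i : Fin n × Fin n))]
  rw [if_pos]
  · rw [List.ofFn_zero, prodT_nil, dd_one]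
  · exact ⟨by simp, List.isChain_nil⟩

lemma sumW_zero (vs : List (Fin n)) : sumW vs 0 = 1 := by
  rw [sumW, Fintype.sum_subsingleton _ (fun (i : Fin 0) => (Fin.elim0 i : Fin n × Fin n))]
  rw [if_pos]
  · rw [List.ofFn_zero, prodT_nil, dd_one]
  · exact ⟨by simp, List.isChain_nil⟩

lemma sumS_nil (c : ℕ) : sumS ([] : List (Fin n)) (c + 1) = 0 := by
  rw [sumS]
  refine Finset.sum_eq_zero fun f _ => ?_
  rw [if_neg]
  rintro ⟨h1, -⟩
  exact List.not_mem_nil ((h1 (f 0) (by rw [List.ofFn_succ]; exact List.mem_cons_self)).2)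

lemma sumW_nil (c : ℕ) : sumW ([] : List (Fin n)) (c + 1) = 0 := by
  rw [sumW]
  refine Finset.sum_eq_zero fun f _ => ?_
  rw [if_neg]
  rintro ⟨h1, -⟩
  exact List.not_mem_nil ((h1 (f 0) (by rw [List.ofFn_succ]; exact List.mem_cons_self)).2)

section CondLemmas

variable {v : Fin n} {vs' : List (Fin n)} (hvs' : ∀ x ∈ vs', v < x)

include hvs'

lemma condS_ne_iff (p : Fin n × Fin n) (l : List (Fin n × Fin n)) :
    (CondS (v :: vs') (p :: l) ∧ p.2 ≠ v) ↔ CondS vs' (p :: l) := by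
  constructor
  · rintro ⟨⟨hmem, hch⟩, hne⟩
    have hp2 : p.2 ∈ vs' := by
      rcases List.mem_cons.1 (hmem p (List.mem_cons_self)).2 with h | h
      · exact absurd h hne
      · exact h
    refine ⟨fun q hq => ?_, hch⟩
    rcases List.mem_cons.1 hq with rfl | hq'
    · exact ⟨(hmem q (List.mem_cons_self)).1, hp2⟩
    · refine ⟨(hmem q (List.mem_cons_of_mem _ hq')).1, ?_⟩
      have hpair : p.2 < q.2 := by
        have := List.isChain_iff_pairwise.1 hch
        rw [List.map_cons, List.pairwise_cons] at this
        exact this.1 q.2 (List.mem_map_of_mem hq')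
      have hgt : v < q.2 := (hvs' _ hp2).trans hpair
      rcases List.mem_cons.1 (hmem q (List.mem_cons_of_mem _ hq')).2 with h | h
      · exact absurd h (ne_of_gt hgt)
      · exact h
  · rintro ⟨hmem, hch⟩
    have hp2 : p.2 ∈ vs' := (hmem p (List.mem_cons_self)).2
    refine ⟨⟨fun q hq => ⟨(hmem q hq).1, List.mem_cons_of_mem _ (hmem q hq).2⟩, hch⟩,
      ne_of_gt (hvs' _ hp2)⟩

lemma condS_eq_iff (p : Fin n × Fin n) (l : List (Fin n × Fin n)) :
    (CondS (v :: vs') (p :: l) ∧ p.2 = v) ↔ ((p.1 < v ∧ p.2 = v) ∧ CondS vs' l) := by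
  constructor
  · rintro ⟨⟨hmem, hch⟩, he⟩
    refine ⟨⟨he ▸ (hmem p (List.mem_cons_self)).1, he⟩, fun q hq => ?_, ?_⟩
    · refine ⟨(hmem q (List.mem_cons_of_mem _ hq)).1, ?_⟩
      have hpair : p.2 < q.2 := by
        have := List.isChain_iff_pairwise.1 hch
        rw [List.map_cons, List.pairwise_cons] at this
        exact this.1 q.2 (List.mem_map_of_mem hq)
      have hgt : v < q.2 := he ▸ hpair
      rcases List.mem_cons.1 (hmem q (List.mem_cons_of_mem _ hq)).2 with h | h
      · exact absurd h (ne_of_gt hgt)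
      · exact h
    · rw [List.map_cons, List.Chain', List.isChain_cons] at hch
      exact hch.2
  · rintro ⟨⟨hlt, he⟩, hmem, hch⟩
    refine ⟨⟨fun q hq => ?_, ?_⟩, he⟩
    · rcases List.mem_cons.1 hq with rfl | hq'
      · exact ⟨he ▸ hlt, he ▸ List.mem_cons_self⟩
      · exact ⟨(hmem q hq').1, List.mem_cons_of_mem _ (hmem q hq').2⟩
    · rw [List.map_cons, List.Chain', List.isChain_cons]
      refine ⟨fun y hy => ?_, hch⟩
      have hy' : y ∈ l.map Prod.snd := List.mem_of_mem_head? hy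
      obtain ⟨q, hq, rfl⟩ := List.mem_map.1 hy'
      exact he ▸ (hvs' _ (hmem q hq).2)

lemma condW_ne_iff (p : Fin n × Fin n) (l : List (Fin n × Fin n)) :
    (CondW (v :: vs') (p :: l) ∧ p.2 ≠ v) ↔ CondW vs' (p :: l) := by
  constructor
  · rintro ⟨⟨hmem, hch⟩, hne⟩
    have hp2 : p.2 ∈ vs' := by
      rcases List.mem_cons.1 (hmem p (List.mem_cons_self)).2 with h | h
      · exact absurd h hne
      · exact h
    refine ⟨fun q hq => ?_, hch⟩
    rcases List.mem_cons.1 hq with rfl | hq'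
    · exact ⟨(hmem q (List.mem_cons_self)).1, hp2⟩
    · refine ⟨(hmem q (List.mem_cons_of_mem _ hq')).1, ?_⟩
      have hpair : p.2 ≤ q.2 := by
        have := List.isChain_iff_pairwise.1 hch
        rw [List.map_cons, List.pairwise_cons] at this
        exact this.1 q.2 (List.mem_map_of_mem hq')
      have hgt : v < q.2 := lt_of_lt_of_le (hvs' _ hp2) hpair
      rcases List.mem_cons.1 (hmem q (List.mem_cons_of_mem _ hq')).2 with h | h
      · exact absurd h (ne_of_gt hgt)
      · exact h
  · rintro ⟨hmem, hch⟩
    have hp2 : p.2 ∈ vs' := (hmem p (List.mem_cons_self)).2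
    refine ⟨⟨fun q hq => ⟨(hmem q hq).1, List.mem_cons_of_mem _ (hmem q hq).2⟩, hch⟩,
      ne_of_gt (hvs' _ hp2)⟩

lemma condW_eq_iff (p : Fin n × Fin n) (l : List (Fin n × Fin n)) :
    (CondW (v :: vs') (p :: l) ∧ p.2 = v) ↔
      ((p.1 < v ∧ p.2 = v) ∧ CondW (v :: vs') l) := by
  constructor
  · rintro ⟨⟨hmem, hch⟩, he⟩
    refine ⟨⟨he ▸ (hmem p (List.mem_cons_self)).1, he⟩,
      fun q hq => hmem q (List.mem_cons_of_mem _ hq), ?_⟩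
    rw [List.map_cons, List.Chain', List.isChain_cons] at hch
    exact hch.2
  · rintro ⟨⟨hlt, he⟩, hmem, hch⟩
    refine ⟨⟨fun q hq => ?_, ?_⟩, he⟩
    · rcases List.mem_cons.1 hq with rfl | hq'
      · exact ⟨he ▸ hlt, he ▸ List.mem_cons_self⟩
      · exact hmem q hq'
    · rw [List.map_cons, List.Chain', List.isChain_cons]
      refine ⟨fun y hy => ?_, hch⟩
      have hy' : y ∈ l.map Prod.snd := List.mem_of_mem_head? hy
      obtain ⟨q, hq, rfl⟩ := List.mem_map.1 hy'
      rcases List.mem_cons.1 (hmem q hq).2 with h | h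
      · exact he ▸ h.ge
      · exact he ▸ (hvs' _ h).le

end CondLemmas

lemma sum_pair_swap_eq (v : Fin n) :
    (∑ p : Fin n × Fin n, if p.1 < v ∧ p.2 = v then dd (Equiv.swap p.1 p.2) else 0)
      = XX v := by
  rw [Fintype.sum_prod_type, XX]
  refine Finset.sum_congr rfl fun a _ => ?_
  have key : ∀ b : Fin n, (if a < v ∧ b = v then dd (Equiv.swap a b) else 0)
      = if b = v then (if a < v then dd (Equiv.swap a b) else 0) else 0 := by
    intro b
    by_cases h1 : b = v <;> by_cases h2 : a < v <;> simp [h1, h2]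
  rw [Finset.sum_congr rfl (fun b _ => key b),
    Finset.sum_ite_eq' Finset.univ v (fun b => if a < v then dd (Equiv.swap a b) else 0),
    if_pos (Finset.mem_univ v)]
lemma sumS_cons (v : Fin n) (vs' : List (Fin n)) (hvs' : ∀ x ∈ vs', v < x) (c : ℕ) :
    sumS (v :: vs') (c + 1) = XX v * sumS vs' c + sumS vs' (c + 1) := by
  rw [sumS, sum_fun_succ c (fun L => if CondS (v :: vs') L then dd (prodT n L) else 0)]
  have split : ∀ q : (Fin n × Fin n) × (Fin c → Fin n × Fin n),
      (if CondS (v :: vs') (q.1 :: List.ofFn q.2) then dd (prodT n (q.1 :: List.ofFn q.2))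
        else 0)
      = (if q.1.1 < v ∧ q.1.2 = v then dd (Equiv.swap q.1.1 q.1.2) else 0) *
          (if CondS vs' (List.ofFn q.2) then dd (prodT n (List.ofFn q.2)) else 0)
        + (if CondS vs' (q.1 :: List.ofFn q.2) then dd (prodT n (q.1 :: List.ofFn q.2))
            else 0) := by
    intro q
    rw [ite_zero_mul_ite_zero, dd_mul, ← prodT_cons]
    by_cases hv : q.1.2 = v
    · have h2 : ¬ CondS vs' (q.1 :: List.ofFn q.2) := by
        intro hc
        exact absurd hv (ne_of_gt (hvs' _ ((hc.1 q.1 (List.mem_cons_self)).2)))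
      rw [if_neg h2, add_zero]
      refine if_congr ?_ rfl rfl
      rw [← condS_eq_iff hvs' q.1 (List.ofFn q.2)]
      exact (and_iff_left hv).symm
    · have h1 : ¬ ((q.1.1 < v ∧ q.1.2 = v) ∧ CondS vs' (List.ofFn q.2)) := by
        rintro ⟨⟨-, hc⟩, -⟩; exact hv hc
      rw [if_neg h1, zero_add]
      refine if_congr ?_ rfl rfl
      rw [← condS_ne_iff hvs' q.1 (List.ofFn q.2)]
      exact (and_iff_left hv).symm
  rw [Finset.sum_congr rfl (fun q _ => split q), Finset.sum_add_distrib]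
  congr 1
  · rw [← sum_pair_swap_eq v, sumS, Fintype.sum_mul_sum]
    exact Fintype.sum_prod_type _
  · rw [sumS, sum_fun_succ c (fun L => if CondS vs' L then dd (prodT n L) else 0)]

lemma sumW_cons (v : Fin n) (vs' : List (Fin n)) (hvs' : ∀ x ∈ vs', v < x) (c : ℕ) :
    sumW (v :: vs') (c + 1) = XX v * sumW (v :: vs') c + sumW vs' (c + 1) := by
  rw [sumW, sum_fun_succ c (fun L => if CondW (v :: vs') L then dd (prodT n L) else 0)]
  have split : ∀ q : (Fin n × Fin n) × (Fin c → Fin n × Fin n),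
      (if CondW (v :: vs') (q.1 :: List.ofFn q.2) then dd (prodT n (q.1 :: List.ofFn q.2))
        else 0)
      = (if q.1.1 < v ∧ q.1.2 = v then dd (Equiv.swap q.1.1 q.1.2) else 0) *
          (if CondW (v :: vs') (List.ofFn q.2) then dd (prodT n (List.ofFn q.2)) else 0)
        + (if CondW vs' (q.1 :: List.ofFn q.2) then dd (prodT n (q.1 :: List.ofFn q.2))
            else 0) := by
    intro q
    rw [ite_zero_mul_ite_zero, dd_mul, ← prodT_cons]
    by_cases hv : q.1.2 = v
    · have h2 : ¬ CondW vs' (q.1 :: List.ofFn q.2) := by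
        intro hc
        exact absurd hv (ne_of_gt (hvs' _ ((hc.1 q.1 (List.mem_cons_self)).2)))
      rw [if_neg h2, add_zero]
      refine if_congr ?_ rfl rfl
      rw [← condW_eq_iff hvs' q.1 (List.ofFn q.2)]
      exact (and_iff_left hv).symm
    · have h1 : ¬ ((q.1.1 < v ∧ q.1.2 = v) ∧ CondW (v :: vs') (List.ofFn q.2)) := by
        rintro ⟨⟨-, hc⟩, -⟩; exact hv hc
      rw [if_neg h1, zero_add]
      refine if_congr ?_ rfl rfl
      rw [← condW_ne_iff hvs' q.1 (List.ofFn q.2)]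
      exact (and_iff_left hv).symm
  rw [Finset.sum_congr rfl (fun q _ => split q), Finset.sum_add_distrib]
  congr 1
  · rw [← sum_pair_swap_eq v, sumW, Fintype.sum_mul_sum]
    exact Fintype.sum_prod_type _
  · rw [sumW, sum_fun_succ c (fun L => if CondW vs' L then dd (prodT n L) else 0)]

lemma chain'_head_lt {v : Fin n} {vs' : List (Fin n)}
    (h : List.Chain' (· < ·) (v :: vs')) : ∀ x ∈ vs', v < x := by
  have := List.isChain_iff_pairwise.1 h
  rw [List.pairwise_cons] at this
  exact this.1

lemma sumS_eq : ∀ (vs : List (Fin n)), List.Chain' (· < ·) vs →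
    ∀ c, sumS vs c = erec (vs.map XX) c := by
  intro vs
  induction vs with
  | nil =>
      intro _ c
      cases c with
      | zero => rw [sumS_zero, List.map_nil, erec_zero]
      | succ c => rw [sumS_nil, List.map_nil, erec_nil]
  | cons v vs' ih =>
      intro hch c
      have hvs' := chain'_head_lt hch
      have hch' : List.Chain' (· < ·) vs' := (List.isChain_cons.1 hch).2
      cases c with
      | zero => rw [sumS_zero, erec_zero]
      | succ c =>
          rw [sumS_cons v vs' hvs' c, ih hch' c, ih hch' (c + 1), List.map_cons, erec_cons,
            add_comm]

lemma sumW_eq : ∀ (vs : List (Fin n)), List.Chain' (· < ·) vs →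
    ∀ c, sumW vs c = hrec (vs.map XX) c := by
  intro vs
  induction vs with
  | nil =>
      intro _ c
      cases c with
      | zero => rw [sumW_zero, List.map_nil, hrec_zero]
      | succ c => rw [sumW_nil, List.map_nil, hrec_nil]
  | cons v vs' ih =>
      intro hch c
      have hvs' := chain'_head_lt hch
      have hch' : List.Chain' (· < ·) vs' := (List.isChain_cons.1 hch).2
      induction c with
      | zero => rw [sumW_zero, hrec_zero]
      | succ c ihc =>
          rw [sumW_cons v vs' hvs' c, ihc, ih hch' (c + 1), List.map_cons, hrec_cons,
            add_comm]
def BCondS (L : List (Fin n × Fin n)) : Prop :=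
  (∀ p ∈ L, p.1 < p.2) ∧ (L.map Prod.snd).Chain' (· < ·)

def BCondW (L : List (Fin n × Fin n)) : Prop :=
  (∀ p ∈ L, p.1 < p.2) ∧ (L.map Prod.snd).Chain' (· ≤ ·)

lemma BCondS_iff (L : List (Fin n × Fin n)) : BCondS L ↔ CondS (List.finRange n) L := by
  constructor
  · rintro ⟨h1, h2⟩; exact ⟨fun p hp => ⟨h1 p hp, List.mem_finRange _⟩, h2⟩
  · rintro ⟨h1, h2⟩; exact ⟨fun p hp => (h1 p hp).1, h2⟩

lemma BCondW_iff (L : List (Fin n × Fin n)) : BCondW L ↔ CondW (List.finRange n) L := by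
  constructor
  · rintro ⟨h1, h2⟩; exact ⟨fun p hp => ⟨h1 p hp, List.mem_finRange _⟩, h2⟩
  · rintro ⟨h1, h2⟩; exact ⟨fun p hp => (h1 p hp).1, h2⟩

def blockSumS (c : ℕ) : MMA n :=
  ∑ f : Fin c → Fin n × Fin n,
    if BCondS (List.ofFn f) then dd (prodT n (List.ofFn f)) else 0

def blockSumW (c : ℕ) : MMA n :=
  ∑ f : Fin c → Fin n × Fin n,
    if BCondW (List.ofFn f) then dd (prodT n (List.ofFn f)) else 0

lemma blockSumS_eq (c : ℕ) : blockSumS (n := n) c = erec ((List.finRange n).map XX) c := by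
  rw [← sumS_eq (List.finRange n) (List.Pairwise.isChain (List.pairwise_lt_finRange n)) c,
    blockSumS, sumS]
  exact Finset.sum_congr rfl fun f _ => if_congr (BCondS_iff _) rfl rfl

lemma blockSumW_eq (c : ℕ) : blockSumW (n := n) c = hrec ((List.finRange n).map XX) c := by
  rw [← sumW_eq (List.finRange n) (List.Pairwise.isChain (List.pairwise_lt_finRange n)) c,
    blockSumW, sumW]
  exact Finset.sum_congr rfl fun f _ => if_congr (BCondW_iff _) rfl rfl

lemma isM_nil_nil (L : List (Fin n × Fin n)) :
    IsMultimonotonic n [] [] L ↔ L = [] := by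
  constructor
  · rintro ⟨-, B, C, hL, hB, hC, -, -⟩
    rw [List.map_eq_nil_iff] at hB hC
    subst hB; subst hC
    simpa using hL
  · rintro rfl
    exact ⟨by simp, [], [], by simp, rfl, rfl, by simp, by simp⟩

lemma isM_cons_first (c : ℕ) (cs ds : List ℕ) (L : List (Fin n × Fin n)) :
    IsMultimonotonic n (c :: cs) ds L ↔
      ∃ L1 L2, L = L1 ++ L2 ∧ L1.length = c ∧ BCondS L1 ∧
        IsMultimonotonic n cs ds L2 := by
  constructor
  · rintro ⟨hp, B, C, hL, hB, hC, hBm, hCm⟩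
    cases B with
    | nil => simp at hB
    | cons β B' =>
        rw [List.map_cons] at hB
        injection hB with hB1 hB2
        have hL' : L = β ++ (B' ++ C).flatten := by
          rw [hL, List.cons_append, List.flatten_cons]
        refine ⟨β, (B' ++ C).flatten, hL', hB1,
          ⟨fun p hp' => hp p (hL' ▸ List.mem_append_left _ hp'),
            hBm β (List.mem_cons_self)⟩,
          ⟨fun p hp' => hp p (hL' ▸ List.mem_append_right _ hp'), B', C, rfl, hB2, hC,
            fun β' h => hBm β' (List.mem_cons_of_mem _ h), hCm⟩⟩
  · rintro ⟨L1, L2, rfl, hlen, ⟨hp1, hm1⟩, hp2, B, C, hL2, hB, hC, hBm, hCm⟩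
    refine ⟨fun p hp' => ?_, L1 :: B, C, ?_, ?_, hC, ?_, hCm⟩
    · rcases List.mem_append.1 hp' with h | h
      · exact hp1 p h
      · exact hp2 p h
    · rw [List.cons_append, List.flatten_cons, ← hL2]
    · rw [List.map_cons, hlen, hB]
    · intro β hβ
      rcases List.mem_cons.1 hβ with rfl | h
      · exact hm1
      · exact hBm β h

lemma isM_cons_second (d : ℕ) (ds : List ℕ) (L : List (Fin n × Fin n)) :
    IsMultimonotonic n [] (d :: ds) L ↔
      ∃ L1 L2, L = L1 ++ L2 ∧ L1.length = d ∧ BCondW L1 ∧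
        IsMultimonotonic n [] ds L2 := by
  constructor
  · rintro ⟨hp, B, C, hL, hB, hC, hBm, hCm⟩
    rw [List.map_eq_nil_iff] at hB
    subst hB
    cases C with
    | nil => simp at hC
    | cons γ C' =>
        rw [List.map_cons] at hC
        injection hC with hC1 hC2
        have hL' : L = γ ++ ([] ++ C').flatten := by
          rw [hL]; simp
        refine ⟨γ, ([] ++ C').flatten, hL', hC1,
          ⟨fun p hp' => hp p (hL' ▸ List.mem_append_left _ hp'),
            hCm γ (List.mem_cons_self)⟩,
          ⟨fun p hp' => hp p (hL' ▸ List.mem_append_right _ hp'), [], C', rfl, rfl, hC2,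
            by simp, fun γ' h => hCm γ' (List.mem_cons_of_mem _ h)⟩⟩
  · rintro ⟨L1, L2, rfl, hlen, ⟨hp1, hm1⟩, hp2, B, C, hL2, hB, hC, hBm, hCm⟩
    rw [List.map_eq_nil_iff] at hB
    subst hB
    refine ⟨fun p hp' => ?_, [], L1 :: C, ?_, rfl, ?_, by simp, ?_⟩
    · rcases List.mem_append.1 hp' with h | h
      · exact hp1 p h
      · exact hp2 p h
    · rw [List.nil_append, List.flatten_cons]
      rw [List.nil_append] at hL2
      rw [← hL2]
    · rw [List.map_cons, hlen, hC]
    · intro γ hγ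
      rcases List.mem_cons.1 hγ with rfl | h
      · exact hm1
      · exact hCm γ h

def ZZtot (cs ds : List ℕ) : MMA n :=
  ∑ f : Fin (cs.sum + ds.sum) → Fin n × Fin n,
    if IsMultimonotonic n cs ds (List.ofFn f) then dd (prodT n (List.ofFn f)) else 0

lemma sum_fun_split (a b N : ℕ) (hN : a + b = N) (F : List (Fin n × Fin n) → MMA n) :
    (∑ f : Fin N → Fin n × Fin n, F (List.ofFn f))
      = ∑ q : (Fin a → Fin n × Fin n) × (Fin b → Fin n × Fin n),
          F (List.ofFn q.1 ++ List.ofFn q.2) := by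
  subst hN
  exact (Fintype.sum_equiv (Fin.appendEquiv a b)
    (fun q => F (List.ofFn q.1 ++ List.ofFn q.2))
    (fun f => F (List.ofFn f))
    (fun q => by simp [Fin.appendEquiv, List.ofFn_fin_append])).symm

lemma ZZ_nil_nil : ZZtot (n := n) [] [] = 1 := by
  haveI hie : IsEmpty (Fin ((([] : List ℕ).sum) + (([] : List ℕ).sum))) :=
    ⟨fun i => absurd i.2 (by simp)⟩
  rw [ZZtot, Fintype.sum_unique]
  rw [show List.ofFn (default : Fin ((([] : List ℕ).sum) + (([] : List ℕ).sum)) →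
      Fin n × Fin n) = [] from by simp,
    if_pos ((isM_nil_nil ([] : List (Fin n × Fin n))).2 rfl), prodT_nil, dd_one]

lemma ZZ_cons_first (c : ℕ) (cs ds : List ℕ) :
    ZZtot (n := n) (c :: cs) ds = blockSumS c * ZZtot cs ds := by
  rw [ZZtot, sum_fun_split c (cs.sum + ds.sum) ((c :: cs).sum + ds.sum)
    (by simp [add_assoc])
    (fun L => if IsMultimonotonic n (c :: cs) ds L then dd (prodT n L) else 0)]
  have split : ∀ q : (Fin c → Fin n × Fin n) × (Fin (cs.sum + ds.sum) → Fin n × Fin n),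
      (if IsMultimonotonic n (c :: cs) ds (List.ofFn q.1 ++ List.ofFn q.2)
        then dd (prodT n (List.ofFn q.1 ++ List.ofFn q.2)) else 0)
      = (if BCondS (List.ofFn q.1) then dd (prodT n (List.ofFn q.1)) else 0) *
        (if IsMultimonotonic n cs ds (List.ofFn q.2) then dd (prodT n (List.ofFn q.2))
          else 0) := by
    intro q
    rw [ite_zero_mul_ite_zero, dd_mul, ← prodT_append]
    refine if_congr ?_ rfl rfl
    constructor
    · intro h
      obtain ⟨L1, L2, heq, hlen, h1, h2⟩ := (isM_cons_first c cs ds _).1 h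
      obtain ⟨e1, e2⟩ := List.append_inj heq (by rw [List.length_ofFn, hlen])
      rw [e1, e2]
      exact ⟨h1, h2⟩
    · rintro ⟨h1, h2⟩
      exact (isM_cons_first c cs ds _).2 ⟨_, _, rfl, List.length_ofFn, h1, h2⟩
  rw [Finset.sum_congr rfl (fun q _ => split q), blockSumS, ZZtot, Fintype.sum_mul_sum]
  exact Fintype.sum_prod_type _

lemma ZZ_cons_second (d : ℕ) (ds : List ℕ) :
    ZZtot (n := n) [] (d :: ds) = blockSumW d * ZZtot [] ds := by
  rw [ZZtot, sum_fun_split d ((([] : List ℕ)).sum + ds.sum) (([] : List ℕ).sum + (d :: ds).sum)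
    (by simp)
    (fun L => if IsMultimonotonic n [] (d :: ds) L then dd (prodT n L) else 0)]
  have split : ∀ q : (Fin d → Fin n × Fin n) ×
      (Fin ((([] : List ℕ)).sum + ds.sum) → Fin n × Fin n),
      (if IsMultimonotonic n [] (d :: ds) (List.ofFn q.1 ++ List.ofFn q.2)
        then dd (prodT n (List.ofFn q.1 ++ List.ofFn q.2)) else 0)
      = (if BCondW (List.ofFn q.1) then dd (prodT n (List.ofFn q.1)) else 0) *
        (if IsMultimonotonic n [] ds (List.ofFn q.2) then dd (prodT n (List.ofFn q.2))
          else 0) := by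
    intro q
    rw [ite_zero_mul_ite_zero, dd_mul, ← prodT_append]
    refine if_congr ?_ rfl rfl
    constructor
    · intro h
      obtain ⟨L1, L2, heq, hlen, h1, h2⟩ := (isM_cons_second d ds _).1 h
      obtain ⟨e1, e2⟩ := List.append_inj heq (by rw [List.length_ofFn, hlen])
      rw [e1, e2]
      exact ⟨h1, h2⟩
    · rintro ⟨h1, h2⟩
      exact (isM_cons_second d ds _).2 ⟨_, _, rfl, List.length_ofFn, h1, h2⟩
  rw [Finset.sum_congr rfl (fun q _ => split q), blockSumW, ZZtot, Fintype.sum_mul_sum]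
  exact Fintype.sum_prod_type _
lemma ZZ_comm {N : ℕ} (cs ds : List ℕ) (σ : Equiv.Perm (Fin (N + 1))) :
    dd σ * ZZtot (n := N + 1) cs ds = ZZtot (n := N + 1) cs ds * dd σ := by
  induction cs with
  | cons c cs ih =>
      have hb : dd σ * blockSumS (n := N + 1) c = blockSumS (n := N + 1) c * dd σ := by
        rw [blockSumS_eq]; exact erec_jm_comm c σ
      rw [ZZ_cons_first, ← mul_assoc, hb, mul_assoc, ih, ← mul_assoc]
  | nil =>
      induction ds with
      | nil => rw [ZZ_nil_nil, mul_one, one_mul]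
      | cons d ds ihd =>
          have hb : dd σ * blockSumW (n := N + 1) d = blockSumW (n := N + 1) d * dd σ := by
            rw [blockSumW_eq]; exact hrec_jm_comm d σ
          rw [ZZ_cons_second, ← mul_assoc, hb, mul_assoc, ihd, ← mul_assoc]

lemma dd_apply (y x : Equiv.Perm (Fin n)) : (dd y).coeff x = if y = x then (1 : ℤ) else 0 :=
  Finsupp.single_apply

lemma ZZ_mul_dd (cs ds : List ℕ) (γ : Equiv.Perm (Fin n)) :
    ZZtot (n := n) cs ds * dd γ
      = ∑ f : Fin (cs.sum + ds.sum) → Fin n × Fin n,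
          if IsMultimonotonic n cs ds (List.ofFn f)
            then dd (prodT n (List.ofFn f) * γ) else 0 := by
  rw [ZZtot, Finset.sum_mul]
  exact Finset.sum_congr rfl fun f _ => by rw [ite_mul, zero_mul, dd_mul]

lemma coeff_formula (cs ds : List ℕ) (K : ConjClasses (Equiv.Perm (Fin n)))
    (γ : Equiv.Perm (Fin n)) :
    (∑ f : Fin (cs.sum + ds.sum) → Fin n × Fin n,
        if IsMultimonotonic n cs ds (List.ofFn f) ∧
            ConjClasses.mk (prodT n (List.ofFn f) * γ) = K then (1 : ℤ) else 0)
      = ∑ x : Equiv.Perm (Fin n),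
          if ConjClasses.mk x = K then (ZZtot (n := n) cs ds * dd γ).coeff x else 0 := by
  have happ : ∀ x : Equiv.Perm (Fin n),
      (ZZtot (n := n) cs ds * dd γ).coeff x
      = ∑ f : Fin (cs.sum + ds.sum) → Fin n × Fin n,
          if IsMultimonotonic n cs ds (List.ofFn f)
            then (if prodT n (List.ofFn f) * γ = x then (1 : ℤ) else 0) else 0 := by
    intro x
    rw [ZZ_mul_dd, MonoidAlgebra.coeff_sum, Finsupp.finset_sum_apply]
    refine Finset.sum_congr rfl fun f _ => ?_
    by_cases hM : IsMultimonotonic n cs ds (List.ofFn f)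
    · rw [if_pos hM, if_pos hM, dd_apply]
    · rw [if_neg hM, if_neg hM]; rfl
  have swap_ite : ∀ x : Equiv.Perm (Fin n),
      (if ConjClasses.mk x = K then
        (∑ f : Fin (cs.sum + ds.sum) → Fin n × Fin n,
          if IsMultimonotonic n cs ds (List.ofFn f)
            then (if prodT n (List.ofFn f) * γ = x then (1 : ℤ) else 0) else 0) else 0)
      = ∑ f : Fin (cs.sum + ds.sum) → Fin n × Fin n,
          if prodT n (List.ofFn f) * γ = x then
            (if IsMultimonotonic n cs ds (List.ofFn f) ∧
              ConjClasses.mk (prodT n (List.ofFn f) * γ) = K then (1 : ℤ) else 0) else 0 := by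
    intro x
    by_cases hK : ConjClasses.mk x = K
    · rw [if_pos hK]
      refine Finset.sum_congr rfl fun f _ => ?_
      by_cases he : prodT n (List.ofFn f) * γ = x
      · subst he; simp [hK]
      · simp [he]
    · rw [if_neg hK]
      refine (Finset.sum_eq_zero fun f _ => ?_).symm
      by_cases he : prodT n (List.ofFn f) * γ = x
      · subst he; simp [hK]
      · simp [he]
  refine Eq.symm ?_
  calc (∑ x : Equiv.Perm (Fin n),
          if ConjClasses.mk x = K then (ZZtot (n := n) cs ds * dd γ).coeff x else 0)
      = ∑ x : Equiv.Perm (Fin n),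
          if ConjClasses.mk x = K then
            (∑ f : Fin (cs.sum + ds.sum) → Fin n × Fin n,
              if IsMultimonotonic n cs ds (List.ofFn f)
                then (if prodT n (List.ofFn f) * γ = x then (1 : ℤ) else 0) else 0) else 0 :=
        Finset.sum_congr rfl (fun x _ => if_congr Iff.rfl (happ x) rfl)
    _ = ∑ x : Equiv.Perm (Fin n), ∑ f : Fin (cs.sum + ds.sum) → Fin n × Fin n,
          if prodT n (List.ofFn f) * γ = x then
            (if IsMultimonotonic n cs ds (List.ofFn f) ∧
              ConjClasses.mk (prodT n (List.ofFn f) * γ) = K then (1 : ℤ) else 0) else 0 :=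
        Finset.sum_congr rfl (fun x _ => swap_ite x)
    _ = ∑ f : Fin (cs.sum + ds.sum) → Fin n × Fin n, ∑ x : Equiv.Perm (Fin n),
          if prodT n (List.ofFn f) * γ = x then
            (if IsMultimonotonic n cs ds (List.ofFn f) ∧
              ConjClasses.mk (prodT n (List.ofFn f) * γ) = K then (1 : ℤ) else 0) else 0 :=
        Finset.sum_comm
    _ = ∑ f : Fin (cs.sum + ds.sum) → Fin n × Fin n,
          if IsMultimonotonic n cs ds (List.ofFn f) ∧
              ConjClasses.mk (prodT n (List.ofFn f) * γ) = K then (1 : ℤ) else 0 := by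
        refine Finset.sum_congr rfl fun f _ => ?_
        rw [Finset.sum_ite_eq Finset.univ (prodT n (List.ofFn f) * γ)
          (fun _ => if IsMultimonotonic n cs ds (List.ofFn f) ∧
            ConjClasses.mk (prodT n (List.ofFn f) * γ) = K then (1 : ℤ) else 0),
          if_pos (Finset.mem_univ _)]

lemma conj_coeff (W : MMA n) (σ : Equiv.Perm (Fin n)) (x : Equiv.Perm (Fin n)) :
    (dd σ * W * dd σ⁻¹).coeff x = W.coeff (σ⁻¹ * x * σ) := by
  rw [dd, dd, MonoidAlgebra.mul_single_apply, MonoidAlgebra.single_mul_apply]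
  rw [inv_inv, one_mul, mul_one, mul_assoc]
lemma main_count {N : ℕ} (cs ds : List ℕ) (K : ConjClasses (Equiv.Perm (Fin (N + 1))))
    (g g' : Equiv.Perm (Fin (N + 1))) (h : IsConj g g') :
    Nat.card {f : Fin (cs.sum + ds.sum) → Fin (N + 1) × Fin (N + 1) //
        IsMultimonotonic (N + 1) cs ds (List.ofFn f) ∧
          ConjClasses.mk (prodT (N + 1) (List.ofFn f) * g) = K} =
    Nat.card {f : Fin (cs.sum + ds.sum) → Fin (N + 1) × Fin (N + 1) //
        IsMultimonotonic (N + 1) cs ds (List.ofFn f) ∧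
          ConjClasses.mk (prodT (N + 1) (List.ofFn f) * g') = K} := by
  obtain ⟨σ, hσ⟩ := isConj_iff.1 h
  have hcard : ∀ γ : Equiv.Perm (Fin (N + 1)),
      ((Nat.card {f : Fin (cs.sum + ds.sum) → Fin (N + 1) × Fin (N + 1) //
        IsMultimonotonic (N + 1) cs ds (List.ofFn f) ∧
          ConjClasses.mk (prodT (N + 1) (List.ofFn f) * γ) = K} : ℤ))
      = ∑ f : Fin (cs.sum + ds.sum) → Fin (N + 1) × Fin (N + 1),
          if IsMultimonotonic (N + 1) cs ds (List.ofFn f) ∧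
            ConjClasses.mk (prodT (N + 1) (List.ofFn f) * γ) = K then (1 : ℤ) else 0 := by
    intro γ
    rw [Nat.card_eq_fintype_card, Fintype.card_subtype, Finset.card_filter, Nat.cast_sum]
    exact Finset.sum_congr rfl fun f _ => by split <;> simp
  have hW : ZZtot (n := N + 1) cs ds * dd g'
      = dd σ * (ZZtot (n := N + 1) cs ds * dd g) * dd σ⁻¹ := by
    rw [← hσ, ← dd_mul, ← dd_mul, ← mul_assoc, ← mul_assoc, ← ZZ_comm cs ds σ,
      mul_assoc (dd σ) (ZZtot (n := N + 1) cs ds) (dd g)]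
  have reindex :
      (∑ x : Equiv.Perm (Fin (N + 1)),
        if ConjClasses.mk x = K then (ZZtot (n := N + 1) cs ds * dd g).coeff (σ⁻¹ * x * σ) else 0)
      = ∑ y : Equiv.Perm (Fin (N + 1)),
          if ConjClasses.mk y = K then (ZZtot (n := N + 1) cs ds * dd g).coeff y else 0 := by
    refine (Fintype.sum_equiv (MulAut.conj σ).toEquiv
      (fun y => if ConjClasses.mk y = K then (ZZtot (n := N + 1) cs ds * dd g).coeff y else 0)
      (fun x => if ConjClasses.mk x = K
        then (ZZtot (n := N + 1) cs ds * dd g).coeff (σ⁻¹ * x * σ) else 0)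
      (fun y => ?_)).symm
    have e1 : (MulAut.conj σ).toEquiv y = σ * y * σ⁻¹ := rfl
    have e2 : σ⁻¹ * (σ * y * σ⁻¹) * σ = y := by group
    have e3 : ConjClasses.mk (σ * y * σ⁻¹) = ConjClasses.mk y :=
      ConjClasses.mk_eq_mk_iff_isConj.2 (isConj_iff.2 ⟨σ⁻¹, by group⟩)
    simp only [e1, e2, e3]
  have key : ((Nat.card {f : Fin (cs.sum + ds.sum) → Fin (N + 1) × Fin (N + 1) //
        IsMultimonotonic (N + 1) cs ds (List.ofFn f) ∧
          ConjClasses.mk (prodT (N + 1) (List.ofFn f) * g) = K} : ℤ))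
      = ((Nat.card {f : Fin (cs.sum + ds.sum) → Fin (N + 1) × Fin (N + 1) //
        IsMultimonotonic (N + 1) cs ds (List.ofFn f) ∧
          ConjClasses.mk (prodT (N + 1) (List.ofFn f) * g') = K} : ℤ)) := by
    rw [hcard g, hcard g', coeff_formula cs ds K g, coeff_formula cs ds K g', hW]
    rw [Finset.sum_congr rfl (fun x _ => if_congr Iff.rfl
      (conj_coeff (ZZtot (n := N + 1) cs ds * dd g) σ x) rfl)] at *
    exact reindex.symm
  exact_mod_cast key

end MMaux

/-- The number of multimonotonic sequences of transpositions of type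
`((c_1,…,c_l), (d_1,…,d_m))` whose product, multiplied by `g`, lands in a fixed conjugacy
class `K` of `S_n` depends only on the conjugacy class (cycle type) of `g`. -/
theorem multimonotonic_count_conj_invariant (n : ℕ) (hn : 1 ≤ n) (cs ds : List ℕ)
    (K : ConjClasses (Equiv.Perm (Fin n))) (g g' : Equiv.Perm (Fin n)) (h : IsConj g g') :
    Nat.card {f : Fin (cs.sum + ds.sum) → Fin n × Fin n //
        IsMultimonotonic n cs ds (List.ofFn f) ∧
          ConjClasses.mk (prodT n (List.ofFn f) * g) = K} =
    Nat.card {f : Fin (cs.sum + ds.sum) → Fin n × Fin n //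
        IsMultimonotonic n cs ds (List.ofFn f) ∧
          ConjClasses.mk (prodT n (List.ofFn f) * g') = K} := by
  obtain ⟨N, rfl⟩ : ∃ N, n = N + 1 := ⟨n - 1, by omega⟩
  exact main_count cs ds K g g' h
end

section
/- Let G be a finite group and let χ and χ' be irreducible ℂ-characters of G. Then the central group-algebra elements F_χ := (χ(1)/|G|) Σ_{g ∈ G} χ(g⁻¹) g satisfy F_χ · F_{χ'} = δ_{χ,χ'} F_χ; that is, F_χ · F_χ = F_χ, and F_χ · F_{χ'} = 0 whenever χ ≠ χ'. -/
/-- `χ : G → ℂ` is an irreducible character of the finite group `G`: it is the character of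
some irreducible (simple) finite-dimensional complex representation of `G`. -/
def IsIrreducibleCharacter (G : Type) [Group G] (χ : G → ℂ) : Prop :=
  ∃ V : FDRep ℂ G, CategoryTheory.Simple V ∧ FDRep.character V = χ

/-- The central group-algebra element `F_χ = (χ(1)/|G|) ∑_{g ∈ G} χ(g⁻¹) g ∈ ℂ[G]`
attached to a character `χ` of a finite group `G`. -/
noncomputable def charIdem (G : Type) [Group G] [Fintype G] (χ : G → ℂ) :
    MonoidAlgebra ℂ G :=
  (χ 1 / (Fintype.card G : ℂ)) • ∑ g : G, MonoidAlgebra.single g (χ g⁻¹)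

section Aux
open CategoryTheory FDRep
variable {G : Type} [Group G] [Fintype G]

private lemma key (V W : FDRep ℂ G) [Simple W] :
    ∃ c : ℂ, ∀ k : G, ∑ g : G, V.character g⁻¹ * W.character (k⁻¹ * g)
      = c * W.character k⁻¹ := by
  set S : Module.End ℂ W := ∑ g : G, V.character g⁻¹ • (W.ρ g : Module.End ℂ W) with hS
  have hcomm : ∀ h : G, (W.ρ h : Module.End ℂ W) * S = S * W.ρ h := by
    intro h
    rw [hS, Finset.mul_sum, Finset.sum_mul]
    refine Fintype.sum_equiv ((Equiv.mulLeft h).trans (Equiv.mulRight h⁻¹)) _ _ (fun x => ?_)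
    simp only [Equiv.trans_apply, Equiv.coe_mulLeft, Equiv.coe_mulRight]
    rw [mul_smul_comm, smul_mul_assoc, ← map_mul, ← map_mul]
    congr 1
    · rw [show (h * x * h⁻¹)⁻¹ = h * x⁻¹ * h⁻¹ by group, char_conj]
    · congr 1; group
  have hcomm' : ∀ h : G, W.ρ h ∘ₗ (S : W →ₗ[ℂ] W) = (S : W →ₗ[ℂ] W) ∘ₗ W.ρ h := hcomm
  set f : W ⟶ W := ⟨ObjectProperty.homMk (ModuleCat.ofHom (S : W →ₗ[ℂ] W)), fun g => by
    ext x; exact LinearMap.congr_fun (hcomm' g).symm x⟩ with hf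
  obtain ⟨c, hc⟩ := endomorphism_simple_eq_smul_id (𝕜 := ℂ) f
  have hSc : S = c • (1 : Module.End ℂ W) := by
    have : (f.hom.hom.hom : W →ₗ[ℂ] W) = c • LinearMap.id := by rw [← hc]; rfl
    exact this
  refine ⟨c, fun k => ?_⟩
  have : ∑ g : G, V.character g⁻¹ * W.character (k⁻¹ * g)
      = LinearMap.trace ℂ W ((W.ρ k⁻¹ : Module.End ℂ W) * S) := by
    rw [hS, Finset.mul_sum, map_sum]
    refine Finset.sum_congr rfl (fun g _ => ?_)
    rw [mul_smul_comm, map_smul, ← map_mul]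
    simp [character, smul_eq_mul]
  rw [this, hSc, mul_smul_comm, mul_one, map_smul]
  simp [character, smul_eq_mul]

open scoped Classical in
private lemma orth (V W : FDRep ℂ G) [Simple V] [Simple W] :
    ∑ g : G, V.character g * W.character g⁻¹ =
      if Nonempty (V ≅ W) then (Fintype.card G : ℂ) else 0 := by
  classical
  have hN : (Fintype.card G : ℂ) ≠ 0 := Nat.cast_ne_zero.mpr Fintype.card_ne_zero
  letI : Fintype (GrpCat.of G) := ‹Fintype G›
  letI : Invertible ((Fintype.card (GrpCat.of G)) : ℂ) := invertibleOfNonzero hN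
  have h := FDRep.char_orthonormal (k := ℂ) (G := GrpCat.of G) V W
  rw [Nat.card_eq_fintype_card, inv_mul_eq_iff_eq_mul₀ (Nat.cast_ne_zero.mpr Fintype.card_ne_zero)] at h
  refine h.trans ?_
  split <;> simp


private lemma expand (χ χ' : G → ℂ) :
    charIdem G χ * charIdem G χ' = (χ 1 * χ' 1 / ((Fintype.card G : ℂ) * (Fintype.card G : ℂ))) •
      ∑ k : G, MonoidAlgebra.single k (∑ g : G, χ g⁻¹ * χ' (k⁻¹ * g)) := by
  rw [charIdem, charIdem, smul_mul_smul_comm, div_mul_div_comm]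
  congr 1
  rw [Finset.sum_mul_sum]
  have step : ∀ g : G, ∑ h : G, MonoidAlgebra.single (R := ℂ) (g * h) (χ g⁻¹ * χ' h⁻¹)
      = ∑ k : G, MonoidAlgebra.single k (χ g⁻¹ * χ' (k⁻¹ * g)) := by
    intro g
    refine Fintype.sum_equiv (Equiv.mulLeft g) _ _ (fun h => ?_)
    simp only [Equiv.coe_mulLeft]
    congr 1
    rw [mul_inv_rev, inv_mul_cancel_right]
  calc ∑ g : G, ∑ h : G, MonoidAlgebra.single g (χ g⁻¹) * MonoidAlgebra.single h (χ' h⁻¹)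
      = ∑ g : G, ∑ k : G, MonoidAlgebra.single k (χ g⁻¹ * χ' (k⁻¹ * g)) := by
        refine Finset.sum_congr rfl (fun g _ => ?_)
        rw [← step g]
        exact Finset.sum_congr rfl (fun h _ => MonoidAlgebra.single_mul_single _ _ _ _)
    _ = ∑ k : G, MonoidAlgebra.single k (∑ g : G, χ g⁻¹ * χ' (k⁻¹ * g)) := by
        rw [Finset.sum_comm]
        exact Finset.sum_congr rfl (fun k _ => (map_sum (MonoidAlgebra.singleAddHom k) _ _).symm)

end Aux

open CategoryTheory FDRep in
/-- Orthogonal idempotents: for irreducible characters `χ, χ'` of a finite group `G`, the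
elements `F_χ = (χ(1)/|G|) ∑_g χ(g⁻¹) g` satisfy `F_χ · F_{χ'} = δ_{χ,χ'} F_χ`; that is,
`F_χ · F_χ = F_χ`, and `F_χ · F_{χ'} = 0` whenever `χ ≠ χ'`. -/
theorem charIdem_orthogonal_idempotent (G : Type) [Group G] [Fintype G] (χ χ' : G → ℂ)
    (hχ : IsIrreducibleCharacter G χ) (hχ' : IsIrreducibleCharacter G χ') :
    charIdem G χ * charIdem G χ = charIdem G χ ∧
      (χ ≠ χ' → charIdem G χ * charIdem G χ' = 0) := by
  classical
  obtain ⟨V, hV, rfl⟩ := hχ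
  obtain ⟨W, hW, rfl⟩ := hχ'
  haveI := hV; haveI := hW
  set N : ℂ := (Fintype.card G : ℂ) with hNdef
  have hN : N ≠ 0 := Nat.cast_ne_zero.mpr Fintype.card_ne_zero
  -- dimensions are nonzero
  have dimpos : ∀ (U : FDRep ℂ G), Simple U → U.character 1 ≠ 0 := by
    intro U hU
    haveI := hU
    obtain ⟨c, hc⟩ := key U U
    have h1 := hc 1
    simp only [inv_one, one_mul] at h1
    have h2 : ∑ g : G, U.character g⁻¹ * U.character g = N := by
      have := orth U U
      rw [if_pos ⟨Iso.refl U⟩] at this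
      rw [hNdef, ← this]
      exact Fintype.sum_equiv (Equiv.refl G) _ _ (fun g => mul_comm _ _)
    intro h0
    rw [h0, mul_zero, h2] at h1
    exact hN h1
  constructor
  · -- idempotent
    obtain ⟨c, hc⟩ := key V V
    have h1 := hc 1
    simp only [inv_one, one_mul] at h1
    have h2 : ∑ g : G, V.character g⁻¹ * V.character g = N := by
      have := orth V V
      rw [if_pos ⟨Iso.refl V⟩] at this
      rw [hNdef, ← this]
      exact Fintype.sum_equiv (Equiv.refl G) _ _ (fun g => mul_comm _ _)
    have hcχ : c * V.character 1 = N := by rw [← h1, h2]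
    rw [expand]
    have : ∀ k : G, MonoidAlgebra.single (R := ℂ) k (∑ g : G, V.character g⁻¹ *
        V.character (k⁻¹ * g)) = c • MonoidAlgebra.single k (V.character k⁻¹) := by
      intro k
      rw [hc k, MonoidAlgebra.smul_single, smul_eq_mul]
    rw [Finset.sum_congr rfl (fun k _ => this k), ← Finset.smul_sum, smul_smul, charIdem]
    congr 1
    have hgoal : ∀ d : ℂ, c * d = N → d * d / (N * N) * c = d / N := by
      intro d hd
      field_simp
      linear_combination d * hd
    exact hgoal _ hcχ
  · -- orthogonality
    intro hne
    obtain ⟨c, hc⟩ := key V W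
    have h1 := hc 1
    simp only [inv_one, one_mul] at h1
    have h2 : ∑ g : G, V.character g⁻¹ * W.character g = 0 := by
      have := orth W V
      rw [if_neg (fun ⟨i⟩ => hne (char_iso i).symm)] at this
      rw [← this]
      exact Fintype.sum_equiv (Equiv.refl G) _ _ (fun g => mul_comm _ _)
    have hc0 : c = 0 := by
      rw [h2] at h1
      rcases mul_eq_zero.mp h1.symm with h | h
      · exact h
      · exact absurd h (dimpos W hW)
    rw [expand]
    have : ∀ k : G, (∑ g : G, V.character g⁻¹ * W.character (k⁻¹ * g)) = 0 := by
      intro k; rw [hc k, hc0, zero_mul]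
    simp [this]
end
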